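/- arXiv:1709.06966 — 4 statements merged into one kernel-verified Lean document; each statement's English description precedes it below -/
import Mathlib

section
/- Let q > 2 and let f ∈ L^q(ℝ) be non-negative. Then there exists a constant C, depending only on q, such that for all t > 0, all ε > 0 and all x ∈ ℝ one has ∫₀^{t} ∫_ℝ ( G_{t+ε−s}(x−y) − G_{t−s}(x−y) )² f(y)² dy ds ≤ C ‖f‖²_{L^q(ℝ)} ε^{1/2 − 1/q}. -/
open MeasureTheory Real Filter

/-- The heat kernel on `ℝ`: `G t x = (4πt)^(-1/2) exp(-x²/(4t))`. -/
noncomputable def G (t x : ℝ) : ℝ :=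
  (4 * Real.pi * t) ^ (-(1:ℝ)/2) * Real.exp (-x ^ 2 / (4 * t))

@[fun_prop]
lemma G_meas : Measurable fun p : ℝ × ℝ => G p.1 p.2 := by
  unfold G; fun_prop

lemma G_nonneg {t : ℝ} (ht : 0 < t) (x : ℝ) : 0 ≤ G t x := by
  unfold G; positivity

lemma exp_int {c : ℝ} (hc : 0 < c) (K : ℝ) (hK : 0 ≤ K) :
    (∫⁻ z : ℝ, ENNReal.ofReal (K * Real.exp (-c * z ^ 2)))
      = ENNReal.ofReal (K * Real.sqrt (π / c)) := by
  rw [← MeasureTheory.ofReal_integral_eq_lintegral_ofReal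
      ((integrable_exp_neg_mul_sq hc).const_mul K)
      (Filter.Eventually.of_forall fun z => by positivity),
    MeasureTheory.integral_const_mul, integral_gaussian]

-- Gaussian rpow integral bound
lemma G_rpow_int {b ρ : ℝ} (hb : 0 < b) (hρ : 1 ≤ ρ) :
    (∫⁻ z : ℝ, ENNReal.ofReal ((G b z) ^ ρ)) ≤ ENNReal.ofReal (b ^ ((1 - ρ)/2)) := by
  have h4πb : (0:ℝ) < 4 * π * b := by positivity
  have hρ0 : 0 < ρ := lt_of_lt_of_le one_pos hρ
  have key : ∀ z : ℝ, (G b z) ^ ρ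
      = (4 * π * b) ^ (-(1:ℝ)/2 * ρ) * Real.exp (-(ρ/(4*b)) * z ^ 2) := by
    intro z
    unfold G
    rw [Real.mul_rpow (Real.rpow_nonneg h4πb.le _) (Real.exp_pos _).le,
      ← Real.rpow_mul h4πb.le, ← Real.exp_mul]
    congr 1
    ring
  simp only [key]
  rw [exp_int (by positivity) _ (Real.rpow_nonneg h4πb.le _)]
  apply ENNReal.ofReal_le_ofReal
  -- (4πb)^(-ρ/2) * √(π/(ρ/(4b))) ≤ b^((1-ρ)/2)
  have h1 : Real.sqrt (π / (ρ/(4*b))) ≤ (4 * π * b) ^ ((1:ℝ)/2) := by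
    rw [← Real.sqrt_eq_rpow]
    apply Real.sqrt_le_sqrt
    rw [div_div_eq_mul_div, div_le_iff₀ hρ0]
    nlinarith [Real.pi_pos]
  calc (4 * π * b) ^ (-(1:ℝ)/2 * ρ) * Real.sqrt (π / (ρ/(4*b)))
      ≤ (4 * π * b) ^ (-(1:ℝ)/2 * ρ) * (4 * π * b) ^ ((1:ℝ)/2) := by
        exact mul_le_mul_of_nonneg_left h1 (Real.rpow_nonneg h4πb.le _)
    _ = (4 * π * b) ^ ((1 - ρ)/2) := by
        rw [← Real.rpow_add h4πb]; congr 1; ring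
    _ ≤ b ^ ((1 - ρ)/2) := by
        apply Real.rpow_le_rpow_of_nonpos hb (by nlinarith [Real.pi_gt_three])
        linarith

@[fun_prop]
lemma G_meas1 (a : ℝ) : Measurable (G a) :=
  G_meas.comp (measurable_const.prodMk measurable_id)

lemma G_diff_crude {a b ρ : ℝ} (hb : 0 < b) (hab : b ≤ a) (hρ : 1 ≤ ρ) :
    (∫⁻ z : ℝ, ENNReal.ofReal (|G a z - G b z| ^ ρ))
      ≤ ENNReal.ofReal (2 * b ^ ((1 - ρ)/2)) := by
  have ha : 0 < a := lt_of_lt_of_le hb hab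
  have hρ0 : (0:ℝ) ≤ ρ := by linarith
  have hpt : ∀ z : ℝ, ENNReal.ofReal (|G a z - G b z| ^ ρ)
      ≤ ENNReal.ofReal ((G a z) ^ ρ) + ENNReal.ofReal ((G b z) ^ ρ) := by
    intro z
    rw [← ENNReal.ofReal_add (Real.rpow_nonneg (G_nonneg ha z) _)
        (Real.rpow_nonneg (G_nonneg hb z) _)]
    apply ENNReal.ofReal_le_ofReal
    have hmax : |G a z - G b z| ≤ max (G a z) (G b z) := by
      rw [abs_sub_le_iff]
      constructor
      · have := le_max_left (G a z) (G b z); have := G_nonneg hb z; linarith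
      · have := le_max_right (G a z) (G b z); have := G_nonneg ha z; linarith
    calc |G a z - G b z| ^ ρ ≤ (max (G a z) (G b z)) ^ ρ :=
          Real.rpow_le_rpow (abs_nonneg _) hmax hρ0
      _ ≤ (G a z) ^ ρ + (G b z) ^ ρ := by
          rcases max_cases (G a z) (G b z) with ⟨h1, _⟩ | ⟨h1, _⟩ <;> rw [h1]
          · nlinarith [Real.rpow_nonneg (G_nonneg hb z) ρ]
          · nlinarith [Real.rpow_nonneg (G_nonneg ha z) ρ]
  calc (∫⁻ z : ℝ, ENNReal.ofReal (|G a z - G b z| ^ ρ))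
      ≤ ∫⁻ z : ℝ, (ENNReal.ofReal ((G a z) ^ ρ) + ENNReal.ofReal ((G b z) ^ ρ)) :=
        lintegral_mono hpt
    _ = (∫⁻ z : ℝ, ENNReal.ofReal ((G a z) ^ ρ))
        + ∫⁻ z : ℝ, ENNReal.ofReal ((G b z) ^ ρ) :=
        lintegral_add_left (by fun_prop : Measurable fun z : ℝ => ENNReal.ofReal ((G a z) ^ ρ)) _
    _ ≤ ENNReal.ofReal (a ^ ((1 - ρ)/2)) + ENNReal.ofReal (b ^ ((1 - ρ)/2)) :=
        add_le_add (G_rpow_int ha hρ) (G_rpow_int hb hρ)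
    _ ≤ ENNReal.ofReal (2 * b ^ ((1 - ρ)/2)) := by
        rw [two_mul, ENNReal.ofReal_add (Real.rpow_nonneg hb.le _) (Real.rpow_nonneg hb.le _)]
        exact add_le_add_left (ENNReal.ofReal_le_ofReal
          (Real.rpow_le_rpow_of_nonpos hb hab (by linarith : (1 - ρ)/2 ≤ 0))) _

lemma G_hasDeriv {τ : ℝ} (z : ℝ) (hτ : 0 < τ) :
    HasDerivAt (fun u => G u z)
      ((4*π) * (-(1:ℝ)/2) * (4*π*τ) ^ (-(1:ℝ)/2 - 1) * Real.exp (-z^2/(4*τ))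
        + (4*π*τ) ^ (-(1:ℝ)/2) * (Real.exp (-z^2/(4*τ)) * (-z^2/4 * (-(τ^2)⁻¹)))) τ := by
  have h4πτ : (0:ℝ) < 4*π*τ := by positivity
  have h1 : HasDerivAt (fun u : ℝ => 4*π*u) (4*π) τ := by
    simpa using (hasDerivAt_id τ).const_mul (4*π)
  have h2 : HasDerivAt (fun u : ℝ => (4*π*u) ^ (-(1:ℝ)/2))
      ((4*π) * (-(1:ℝ)/2) * (4*π*τ) ^ (-(1:ℝ)/2 - 1)) τ :=
    h1.rpow_const (Or.inl h4πτ.ne')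
  have h3 : HasDerivAt (fun u : ℝ => -z^2/(4*u)) (-z^2/4 * (-(τ^2)⁻¹)) τ := by
    have h3a := (hasDerivAt_inv hτ.ne').const_mul (-z^2/4)
    have : (fun u : ℝ => -z^2/(4*u)) = fun u : ℝ => -z^2/4 * u⁻¹ := by
      funext u; field_simp
    rw [this]
    exact h3a
  have h4 := h3.exp
  have h5 := h2.mul h4
  exact h5

lemma D_bound {b c z : ℝ} (hb : 0 < b) (hc1 : b ≤ c) (hc2 : c ≤ 2*b) :
    |(4*π) * (-(1:ℝ)/2) * (4*π*c) ^ (-(1:ℝ)/2 - 1) * Real.exp (-z^2/(4*c))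
        + (4*π*c) ^ (-(1:ℝ)/2) * (Real.exp (-z^2/(4*c)) * (-z^2/4 * (-(c^2)⁻¹)))|
      ≤ 11 * b ^ (-(3:ℝ)/2) * Real.exp (-z^2/(16*b)) := by
  have hc : 0 < c := lt_of_lt_of_le hb hc1
  have h4πc : (0:ℝ) < 4*π*c := by positivity
  have hπ : (3:ℝ) < π := Real.pi_gt_three
  set E : ℝ := Real.exp (-z^2/(4*c)) with hE
  set E16 : ℝ := Real.exp (-z^2/(16*b)) with hE16
  have hEpos : 0 < E := Real.exp_pos _
  have hE16pos : 0 < E16 := Real.exp_pos _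
  -- E ≤ E16 * E16
  have hEE : E ≤ E16 * E16 := by
    rw [hE, hE16, ← Real.exp_add]
    apply Real.exp_le_exp.2
    have h1 : z^2/(8*b) ≤ z^2/(4*c) := by
      apply div_le_div_of_nonneg_left (sq_nonneg z) (by linarith) (by linarith)
    have h2 : -(z^2/(16*b)) + -(z^2/(16*b)) = -(z^2/(8*b)) := by ring
    have h3 : -z^2/(4*c) = -(z^2/(4*c)) := by ring
    have h4 : -z^2/(16*b) = -(z^2/(16*b)) := by ring
    rw [h3, h4, h2]
    linarith
  have hEE16 : E ≤ E16 := by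
    rw [hE, hE16]
    apply Real.exp_le_exp.2
    have h1 : z^2/(16*b) ≤ z^2/(4*c) := by
      apply div_le_div_of_nonneg_left (sq_nonneg z) (by linarith) (by linarith)
    have h3 : -z^2/(4*c) = -(z^2/(4*c)) := by ring
    have h4 : -z^2/(16*b) = -(z^2/(16*b)) := by ring
    rw [h3, h4]; linarith
  -- rpow bounds
  have hr32 : (4*π*c) ^ (-(1:ℝ)/2 - 1) ≤ b ^ (-(3:ℝ)/2) := by
    have e1 : (4*π*c) ^ (-(1:ℝ)/2 - 1) ≤ b ^ (-(1:ℝ)/2 - 1) :=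
      Real.rpow_le_rpow_of_nonpos hb (by nlinarith) (by norm_num)
    have e2 : b ^ (-(1:ℝ)/2 - 1) = b ^ (-(3:ℝ)/2) := by norm_num
    rwa [e2] at e1
  have hr12 : (4*π*c) ^ (-(1:ℝ)/2) ≤ b ^ (-(1:ℝ)/2) :=
    Real.rpow_le_rpow_of_nonpos hb (by nlinarith) (by norm_num)
  have hb32 : (0:ℝ) < b ^ (-(3:ℝ)/2) := Real.rpow_pos_of_pos hb _
  have hb12 : (0:ℝ) < b ^ (-(1:ℝ)/2) := Real.rpow_pos_of_pos hb _
  -- term1 bound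
  have ht1 : |(4*π) * (-(1:ℝ)/2) * (4*π*c) ^ (-(1:ℝ)/2 - 1) * E|
      ≤ 7 * b ^ (-(3:ℝ)/2) * E16 := by
    have hX : 0 < (4*π*c) ^ (-(1:ℝ)/2 - 1) := Real.rpow_pos_of_pos h4πc _
    have hXE : 0 < (4*π*c) ^ (-(1:ℝ)/2 - 1) * E := mul_pos hX hEpos
    have habs : |(4*π) * (-(1:ℝ)/2) * (4*π*c) ^ (-(1:ℝ)/2 - 1) * E|
        = (2*π) * ((4*π*c) ^ (-(1:ℝ)/2 - 1) * E) := by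
      rw [abs_of_nonpos (by nlinarith)]
      ring
    rw [habs]
    have h7 : 2*π ≤ 7 := by linarith [Real.pi_lt_d2]
    calc (2*π) * ((4*π*c) ^ (-(1:ℝ)/2 - 1) * E)
        ≤ 7 * (b ^ (-(3:ℝ)/2) * E16) :=
          mul_le_mul h7 (mul_le_mul hr32 hEE16 hEpos.le hb32.le) hXE.le (by norm_num)
      _ = 7 * b ^ (-(3:ℝ)/2) * E16 := by ring
  -- term2 bound
  have ht2 : |(4*π*c) ^ (-(1:ℝ)/2) * (E * (-z^2/4 * (-(c^2)⁻¹)))|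
      ≤ 4 * b ^ (-(3:ℝ)/2) * E16 := by
    have hcsq : (0:ℝ) < c^2 := by positivity
    have hw : (-z^2/4 * (-(c^2)⁻¹)) = z^2/(4*c^2) := by
      field_simp
    rw [hw]
    have heq : |(4*π*c) ^ (-(1:ℝ)/2) * (E * (z^2/(4*c^2)))|
        = (4*π*c) ^ (-(1:ℝ)/2) * E * (z^2/(4*c^2)) := by
      rw [abs_of_nonneg (by positivity)]
      ring
    rw [heq]
    -- z^2/(4*c^2) ≤ z^2/(4*b^2)
    have hz1 : z^2/(4*c^2) ≤ z^2/(4*b^2) := by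
      apply div_le_div_of_nonneg_left (sq_nonneg z) (by positivity) (by nlinarith)
    -- u * exp(-u) ≤ 1 with u = z^2/(16*b)
    have hu : z^2/(16*b) * E16 ≤ 1 := by
      rw [hE16]
      have h4 : -z^2/(16*b) = -(z^2/(16*b)) := by ring
      rw [h4]
      set u : ℝ := z^2/(16*b)
      have hu0 : 0 ≤ u := by positivity
      have := Real.add_one_le_exp u
      calc u * Real.exp (-u) ≤ Real.exp u * Real.exp (-u) := by
            apply mul_le_mul_of_nonneg_right (by linarith) (Real.exp_pos _).le
        _ = 1 := by rw [← Real.exp_add]; simp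
    -- combine: (4πc)^{-1/2} ≤ b^{-1/2}; E ≤ E16*E16
    have key : z^2/(4*b^2) * E16 ≤ 4 / b := by
      have : z^2/(4*b^2) = (4/b) * (z^2/(16*b)) := by field_simp; ring
      rw [this, mul_assoc]
      have h4b : (0:ℝ) < 4/b := by positivity
      nlinarith
    have hsplit : b ^ (-(1:ℝ)/2) * (4/b) = 4 * b ^ (-(3:ℝ)/2) := by
      have e3 : b ^ (-(3:ℝ)/2) = b ^ (-(1:ℝ)/2) / b := by
        rw [show (-(3:ℝ)/2) = (-(1:ℝ)/2) - 1 by norm_num, Real.rpow_sub hb, Real.rpow_one]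
      rw [e3]; ring
    calc (4*π*c) ^ (-(1:ℝ)/2) * E * (z^2/(4*c^2))
        ≤ b ^ (-(1:ℝ)/2) * (E16 * E16) * (z^2/(4*b^2)) := by
          apply mul_le_mul
          · exact mul_le_mul hr12 hEE hEpos.le hb12.le
          · exact hz1
          · positivity
          · positivity
      _ = b ^ (-(1:ℝ)/2) * (z^2/(4*b^2) * E16) * E16 := by ring
      _ ≤ b ^ (-(1:ℝ)/2) * (4/b) * E16 := by
          apply mul_le_mul_of_nonneg_right _ hE16pos.le
          exact mul_le_mul_of_nonneg_left key hb12.le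
      _ = 4 * b ^ (-(3:ℝ)/2) * E16 := by rw [hsplit]
  calc |(4*π) * (-(1:ℝ)/2) * (4*π*c) ^ (-(1:ℝ)/2 - 1) * E
        + (4*π*c) ^ (-(1:ℝ)/2) * (E * (-z^2/4 * (-(c^2)⁻¹)))|
      ≤ |(4*π) * (-(1:ℝ)/2) * (4*π*c) ^ (-(1:ℝ)/2 - 1) * E|
        + |(4*π*c) ^ (-(1:ℝ)/2) * (E * (-z^2/4 * (-(c^2)⁻¹)))| := abs_add_le _ _
    _ ≤ 7 * b ^ (-(3:ℝ)/2) * E16 + 4 * b ^ (-(3:ℝ)/2) * E16 := add_le_add ht1 ht2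
    _ = 11 * b ^ (-(3:ℝ)/2) * E16 := by ring

lemma G_diff_mvt {b ε : ℝ} (z : ℝ) (hb : 0 < b) (hε : 0 < ε) (hεb : ε ≤ b) :
    |G (b + ε) z - G b z| ≤ ε * (11 * b ^ (-(3:ℝ)/2) * Real.exp (-z^2/(16*b))) := by
  obtain ⟨c, hc, hslope⟩ := exists_hasDerivAt_eq_slope (fun u => G u z)
    (fun c => (4*π) * (-(1:ℝ)/2) * (4*π*c) ^ (-(1:ℝ)/2 - 1) * Real.exp (-z^2/(4*c))
        + (4*π*c) ^ (-(1:ℝ)/2) * (Real.exp (-z^2/(4*c)) * (-z^2/4 * (-(c^2)⁻¹))))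
    (show b < b + ε by linarith)
    (fun u hu => (G_hasDeriv z (lt_of_lt_of_le hb hu.1)).continuousAt.continuousWithinAt)
    (fun u hu => G_hasDeriv z (lt_trans hb hu.1))
  have hdiff : G (b + ε) z - G b z
      = ((4*π) * (-(1:ℝ)/2) * (4*π*c) ^ (-(1:ℝ)/2 - 1) * Real.exp (-z^2/(4*c))
        + (4*π*c) ^ (-(1:ℝ)/2) * (Real.exp (-z^2/(4*c)) * (-z^2/4 * (-(c^2)⁻¹)))) * ε := by
    rw [hslope]
    rw [show b + ε - b = ε by ring, div_mul_cancel₀ _ hε.ne']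
  rw [hdiff, abs_mul, abs_of_pos hε, mul_comm]
  apply mul_le_mul_of_nonneg_left _ hε.le
  exact D_bound hb hc.1.le (by linarith [hc.2])

lemma G_mvt_int {b ε ρ : ℝ} (hb : 0 < b) (hε : 0 < ε) (hεb : ε ≤ b) (hρ : 1 ≤ ρ) :
    (∫⁻ z : ℝ, ENNReal.ofReal (|G (b+ε) z - G b z| ^ ρ))
      ≤ ENNReal.ofReal (8 * (11*ε) ^ ρ * b ^ ((1 - 3*ρ)/2)) := by
  have hρ0 : (0:ℝ) < ρ := by linarith
  have hπ4 : π ≤ 4 := by linarith [Real.pi_lt_d2]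
  have hpt : ∀ z : ℝ, |G (b+ε) z - G b z| ^ ρ
      ≤ ((11*ε) ^ ρ * (b ^ (-(3:ℝ)/2)) ^ ρ) * Real.exp (-(ρ/(16*b)) * z^2) := by
    intro z
    have h1 := G_diff_mvt z hb hε hεb
    have h2 : |G (b+ε) z - G b z| ^ ρ
        ≤ (ε * (11 * b ^ (-(3:ℝ)/2) * Real.exp (-z^2/(16*b)))) ^ ρ :=
      Real.rpow_le_rpow (abs_nonneg _) h1 hρ0.le
    have h3 : (ε * (11 * b ^ (-(3:ℝ)/2) * Real.exp (-z^2/(16*b)))) ^ ρ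
        = ((11*ε) ^ ρ * (b ^ (-(3:ℝ)/2)) ^ ρ) * Real.exp (-(ρ/(16*b)) * z^2) := by
      have e0 : ε * (11 * b ^ (-(3:ℝ)/2) * Real.exp (-z^2/(16*b)))
          = (11*ε) * b ^ (-(3:ℝ)/2) * Real.exp (-z^2/(16*b)) := by ring
      rw [e0, Real.mul_rpow (by positivity) (Real.exp_pos _).le,
        Real.mul_rpow (by positivity) (by positivity), ← Real.exp_mul]
      congr 1
      ring
    rw [h3] at h2
    exact h2
  have hc : (0:ℝ) < ρ/(16*b) := by positivity
  have hK : (0:ℝ) ≤ (11*ε) ^ ρ * (b ^ (-(3:ℝ)/2)) ^ ρ := by positivity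
  calc (∫⁻ z : ℝ, ENNReal.ofReal (|G (b+ε) z - G b z| ^ ρ))
      ≤ ∫⁻ z : ℝ, ENNReal.ofReal (((11*ε) ^ ρ * (b ^ (-(3:ℝ)/2)) ^ ρ)
          * Real.exp (-(ρ/(16*b)) * z^2)) :=
        lintegral_mono fun z => ENNReal.ofReal_le_ofReal (hpt z)
    _ = ENNReal.ofReal (((11*ε) ^ ρ * (b ^ (-(3:ℝ)/2)) ^ ρ) * Real.sqrt (π / (ρ/(16*b)))) :=
        exp_int hc _ hK
    _ ≤ ENNReal.ofReal (8 * (11*ε) ^ ρ * b ^ ((1 - 3*ρ)/2)) := by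
        apply ENNReal.ofReal_le_ofReal
        have hs : Real.sqrt (π / (ρ/(16*b))) ≤ 8 * b ^ ((1:ℝ)/2) := by
          have h64 : π / (ρ/(16*b)) ≤ 64 * b := by
            rw [div_div_eq_mul_div, div_le_iff₀ hρ0]
            nlinarith
          calc Real.sqrt (π / (ρ/(16*b))) ≤ Real.sqrt (64 * b) := Real.sqrt_le_sqrt h64
            _ = 8 * b ^ ((1:ℝ)/2) := by
              rw [show (64:ℝ) * b = 8^2 * b by norm_num, Real.sqrt_mul (by positivity),
                Real.sqrt_sq (by norm_num), Real.sqrt_eq_rpow]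
        have hbb : (b ^ (-(3:ℝ)/2)) ^ ρ * b ^ ((1:ℝ)/2) = b ^ ((1 - 3*ρ)/2) := by
          rw [← Real.rpow_mul hb.le, ← Real.rpow_add hb]
          congr 1
          ring
        calc ((11*ε) ^ ρ * (b ^ (-(3:ℝ)/2)) ^ ρ) * Real.sqrt (π / (ρ/(16*b)))
            ≤ ((11*ε) ^ ρ * (b ^ (-(3:ℝ)/2)) ^ ρ) * (8 * b ^ ((1:ℝ)/2)) :=
              mul_le_mul_of_nonneg_left hs hK
          _ = 8 * (11*ε) ^ ρ * ((b ^ (-(3:ℝ)/2)) ^ ρ * b ^ ((1:ℝ)/2)) := by ring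
          _ = 8 * (11*ε) ^ ρ * b ^ ((1 - 3*ρ)/2) := by rw [hbb]

set_option maxHeartbeats 2000000 in
theorem heat_kernel_epsilon_shift_estimate
    (q : ℝ) (hq : 2 < q) (f : ℝ → ℝ) (hfm : Measurable f) (hf0 : ∀ y, 0 ≤ f y)
    (hfq : MeasureTheory.Integrable (fun y => f y ^ q)) :
    ∃ C : ℝ, 0 < C ∧ ∀ t ε x : ℝ, 0 < t → 0 < ε →
      ∫ s in (0:ℝ)..t, ∫ y : ℝ,
          (G (t + ε - s) (x - y) - G (t - s) (x - y)) ^ 2 * f y ^ 2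
        ≤ C * ((∫ y : ℝ, f y ^ q) ^ (1/q)) ^ 2 * ε ^ ((1:ℝ)/2 - 1/q) := by
  have hq0 : (0:ℝ) < q := by linarith
  have hq2 : (0:ℝ) < q - 2 := by linarith
  set σ : ℝ := (1:ℝ)/2 - 1/q with hσdef
  have hσ : 0 < σ := by
    rw [hσdef]
    have : 1/q < 1/2 := by
      rw [div_lt_div_iff₀ hq0 two_pos]; linarith
    linarith
  set p1 : ℝ := q/(q-2) with hp1def
  have hp1 : 1 < p1 := by
    rw [hp1def, lt_div_iff₀ hq2]; linarith
  have hp1pos : 0 < p1 := lt_trans one_pos hp1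
  have hconj : Real.HolderConjugate p1 (q/2) := by
    rw [Real.holderConjugate_iff]
    constructor
    · exact hp1
    · rw [hp1def]
      field_simp
      ring
  set ρ : ℝ := 2 * p1 with hρdef
  have hρ1 : 1 ≤ ρ := by rw [hρdef]; linarith
  set β1 : ℝ := -(1/2 + 1/q) with hβ1def
  set β2 : ℝ := -(5/2 + 1/q) with hβ2def
  have hβ1 : (-1:ℝ) < β1 := by
    rw [hβ1def]
    have : 1/q < 1/2 := by rw [div_lt_div_iff₀ hq0 two_pos]; linarith
    linarith
  have hβ2 : β2 < -1 := by
    rw [hβ2def]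
    have : 0 < 1/q := by positivity
    linarith
  set C : ℝ := 2/σ + 1000 with hCdef
  have hC : 0 < C := by rw [hCdef]; positivity
  refine ⟨C, hC, fun t ε x ht hε => ?_⟩
  set B : ℝ := ∫ y : ℝ, f y ^ q with hBdef
  have hB : 0 ≤ B := integral_nonneg fun y => Real.rpow_nonneg (hf0 y) q
  set A2 : ℝ := (B ^ (1/q)) ^ 2 with hA2def
  have hA2 : 0 ≤ A2 := sq_nonneg _
  set χ : ℝ → ℝ := fun b => if b ≤ ε then 2 * b ^ β1 else 1000 * ε^2 * b ^ β2 with hχdef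
  have hχm : Measurable fun b : ℝ => ENNReal.ofReal (χ b) := by
    apply Measurable.ennreal_ofReal
    apply Measurable.ite (measurableSet_le measurable_id measurable_const) <;> fun_prop
  -- Step 1 : Hölder bound for the inner integral
  have key1 : ∀ s ∈ Set.Ioo (0:ℝ) t,
      (∫⁻ y : ℝ, ENNReal.ofReal
          ((G (t + ε - s) (x - y) - G (t - s) (x - y)) ^ 2 * f y ^ 2))
        ≤ ENNReal.ofReal (χ (t - s)) * ENNReal.ofReal A2 := by
    intro s hs
    have hb : 0 < t - s := by linarith [hs.2]
    have hts : t + ε - s = (t - s) + ε := by ring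
    rw [hts]
    set b : ℝ := t - s with hbdef
    -- Hölder
    have hFa : AEMeasurable
        (fun y : ℝ => ENNReal.ofReal ((G (b+ε) (x-y) - G b (x-y))^2)) volume := by
      fun_prop
    have hGa : AEMeasurable (fun y : ℝ => ENNReal.ofReal (f y^2)) volume := by
      fun_prop
    have hHold := ENNReal.lintegral_mul_le_Lp_mul_Lq volume hconj hFa hGa
    simp only [Pi.mul_apply] at hHold
    -- second factor equals ofReal A2
    have factor2 : (∫⁻ y : ℝ, (ENNReal.ofReal (f y^2)) ^ (q/2)) ^ (1/(q/2))
        = ENNReal.ofReal A2 := by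
      have e1 : ∀ y : ℝ, (ENNReal.ofReal (f y^2)) ^ (q/2) = ENNReal.ofReal (f y ^ q) := by
        intro y
        rw [ENNReal.ofReal_rpow_of_nonneg (by positivity) (by positivity)]
        congr 1
        rw [← Real.rpow_natCast (f y) 2, ← Real.rpow_mul (hf0 y)]
        congr 1
        push_cast
        ring
      simp_rw [e1]
      rw [← ofReal_integral_eq_lintegral_ofReal hfq
          (ae_of_all _ fun y => Real.rpow_nonneg (hf0 y) q)]
      rw [ENNReal.ofReal_rpow_of_nonneg hB (by positivity)]
      congr 1
      rw [hA2def, ← Real.rpow_natCast (B^(1/q)) 2, ← Real.rpow_mul hB]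
      congr 1
      push_cast
      field_simp
    -- first factor bound
    have factor1 : (∫⁻ y : ℝ, (ENNReal.ofReal ((G (b+ε) (x-y) - G b (x-y))^2)) ^ p1) ^ (1/p1)
        ≤ ENNReal.ofReal (χ b) := by
      have e2 : ∀ y : ℝ, (ENNReal.ofReal ((G (b+ε) (x-y) - G b (x-y))^2)) ^ p1
          = ENNReal.ofReal (|G (b+ε) (x-y) - G b (x-y)| ^ ρ) := by
        intro y
        rw [ENNReal.ofReal_rpow_of_nonneg (sq_nonneg _) hp1pos.le]
        congr 1
        rw [← sq_abs, ← Real.rpow_natCast |G (b+ε) (x-y) - G b (x-y)| 2,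
          ← Real.rpow_mul (abs_nonneg _), hρdef]
        norm_num
      simp_rw [e2]
      have etrans : (∫⁻ y : ℝ, ENNReal.ofReal (|G (b+ε) (x-y) - G b (x-y)| ^ ρ))
          = ∫⁻ z : ℝ, ENNReal.ofReal (|G (b+ε) z - G b z| ^ ρ) :=
        (Measure.measurePreserving_sub_left volume x).lintegral_comp_emb
          (MeasurableEquiv.subLeft x).measurableEmbedding
          (fun z => ENNReal.ofReal (|G (b+ε) z - G b z| ^ ρ))
      rw [etrans]
      have h1p1 : (0:ℝ) ≤ 1/p1 := by positivity
      have h1p1le : 1/p1 ≤ 1 := by rw [div_le_one hp1pos]; linarith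
      rcases le_or_gt b ε with hcase | hcase
      · -- crude bound
        have hcrude := G_diff_crude hb (le_add_of_nonneg_right hε.le) hρ1
        calc (∫⁻ z : ℝ, ENNReal.ofReal (|G (b+ε) z - G b z| ^ ρ)) ^ (1/p1)
            ≤ (ENNReal.ofReal (2 * b ^ ((1 - ρ)/2))) ^ (1/p1) :=
              ENNReal.rpow_le_rpow hcrude h1p1
          _ ≤ ENNReal.ofReal (χ b) := by
              rw [hχdef]; simp only; rw [if_pos hcase]
              rw [ENNReal.ofReal_rpow_of_nonneg (by positivity) h1p1]
              apply ENNReal.ofReal_le_ofReal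
              rw [Real.mul_rpow (by norm_num) (Real.rpow_nonneg hb.le _),
                ← Real.rpow_mul hb.le]
              have hexp : (1 - ρ)/2 * (1/p1) = β1 := by
                rw [hρdef, hp1def, hβ1def]; field_simp; ring
              rw [hexp]
              apply mul_le_mul_of_nonneg_right _ (Real.rpow_nonneg hb.le β1)
              calc (2:ℝ) ^ (1/p1) ≤ 2 ^ (1:ℝ) :=
                    Real.rpow_le_rpow_of_exponent_le one_le_two h1p1le
                _ = 2 := Real.rpow_one 2
      · -- mvt bound
        have hmvt := G_mvt_int hb hε hcase.le hρ1
        calc (∫⁻ z : ℝ, ENNReal.ofReal (|G (b+ε) z - G b z| ^ ρ)) ^ (1/p1)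
            ≤ (ENNReal.ofReal (8 * (11*ε) ^ ρ * b ^ ((1 - 3*ρ)/2))) ^ (1/p1) :=
              ENNReal.rpow_le_rpow hmvt h1p1
          _ ≤ ENNReal.ofReal (χ b) := by
              rw [hχdef]; simp only; rw [if_neg (not_le.2 hcase)]
              rw [ENNReal.ofReal_rpow_of_nonneg (by positivity) h1p1]
              apply ENNReal.ofReal_le_ofReal
              rw [Real.mul_rpow (by positivity) (Real.rpow_nonneg hb.le _),
                Real.mul_rpow (by norm_num) (by positivity),
                ← Real.rpow_mul (by positivity : (0:ℝ) ≤ 11*ε), ← Real.rpow_mul hb.le]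
              have he1 : ρ * (1/p1) = 2 := by rw [hρdef]; field_simp
              have he2 : (1 - 3*ρ)/2 * (1/p1) = β2 := by
                rw [hρdef, hp1def, hβ2def]; field_simp; ring
              rw [he1, he2]
              have h8 : (8:ℝ) ^ (1/p1) ≤ 8 := by
                calc (8:ℝ) ^ (1/p1) ≤ 8 ^ (1:ℝ) :=
                      Real.rpow_le_rpow_of_exponent_le (by norm_num) h1p1le
                  _ = 8 := Real.rpow_one 8
              have h112 : (11*ε) ^ (2:ℝ) = 121 * ε^2 := by
                rw [show ((2:ℝ)) = ((2:ℕ):ℝ) by norm_num, Real.rpow_natCast]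
                ring
              rw [h112]
              have hbβ2 : (0:ℝ) ≤ b ^ β2 := Real.rpow_nonneg hb.le β2
              have h8p : (0:ℝ) < 8 ^ (1/p1) := by positivity
              nlinarith [sq_nonneg ε, mul_nonneg (sq_nonneg ε) hbβ2]
    calc (∫⁻ y : ℝ, ENNReal.ofReal ((G (b+ε) (x-y) - G b (x-y)) ^ 2 * f y ^ 2))
        = ∫⁻ y : ℝ, ENNReal.ofReal ((G (b+ε) (x-y) - G b (x-y)) ^ 2)
            * ENNReal.ofReal (f y ^ 2) :=
          lintegral_congr fun y => ENNReal.ofReal_mul (sq_nonneg _)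
      _ ≤ (∫⁻ y : ℝ, (ENNReal.ofReal ((G (b+ε) (x-y) - G b (x-y))^2)) ^ p1) ^ (1/p1)
          * (∫⁻ y : ℝ, (ENNReal.ofReal (f y^2)) ^ (q/2)) ^ (1/(q/2)) := hHold
      _ ≤ ENNReal.ofReal (χ b) * ENNReal.ofReal A2 :=
          mul_le_mul' factor1 (le_of_eq factor2)
  -- Step 2 : the s-integral of χ
  have key2 : (∫⁻ s in Set.Ioo (0:ℝ) t, ENNReal.ofReal (χ (t - s)))
      ≤ ENNReal.ofReal (C * ε ^ σ) := by
    have hpre : (fun s : ℝ => t - s) '' (Set.Ioo 0 t) = Set.Ioo 0 t := by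
      ext b
      simp only [Set.mem_image, Set.mem_Ioo]
      constructor
      · rintro ⟨s, ⟨h1, h2⟩, rfl⟩; constructor <;> linarith
      · rintro ⟨h1, h2⟩; exact ⟨t - b, ⟨by linarith, by linarith⟩, by ring⟩
    have hmp : MeasurePreserving (fun s : ℝ => t - s) volume volume :=
      Measure.measurePreserving_sub_left volume t
    have hemb : MeasurableEmbedding (fun s : ℝ => t - s) :=
      (MeasurableEquiv.subLeft t).measurableEmbedding
    have h6 : (∫⁻ s in Set.Ioo (0:ℝ) t, ENNReal.ofReal (χ (t - s)))
        = ∫⁻ b in Set.Ioo (0:ℝ) t, ENNReal.ofReal (χ b) := by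
      have h := hmp.setLIntegral_comp_emb hemb (fun b => ENNReal.ofReal (χ b)) (Set.Ioo 0 t)
      rwa [hpre] at h
    rw [h6]
    have h7 : (∫⁻ b in Set.Ioo (0:ℝ) t, ENNReal.ofReal (χ b))
        ≤ ∫⁻ b in Set.Ioi (0:ℝ), ENNReal.ofReal (χ b) :=
      lintegral_mono_set Set.Ioo_subset_Ioi_self
    have h8 : (∫⁻ b in Set.Ioi (0:ℝ), ENNReal.ofReal (χ b))
        = (∫⁻ b in Set.Ioc (0:ℝ) ε, ENNReal.ofReal (χ b))
          + ∫⁻ b in Set.Ioi ε, ENNReal.ofReal (χ b) := by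
      rw [← Set.Ioc_union_Ioi_eq_Ioi hε.le,
        lintegral_union measurableSet_Ioi (Set.Ioc_disjoint_Ioi le_rfl)]
    -- piece 1
    have e1 : (∫⁻ b in Set.Ioc (0:ℝ) ε, ENNReal.ofReal (χ b))
        = ∫⁻ b in Set.Ioc (0:ℝ) ε, ENNReal.ofReal (2 * b ^ β1) := by
      apply setLIntegral_congr_fun measurableSet_Ioc
      exact fun b hb => by rw [hχdef]; simp only; rw [if_pos hb.2]
    have hInt1 : IntegrableOn (fun b : ℝ => 2 * b ^ β1) (Set.Ioc 0 ε) := by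
      have h := (intervalIntegral.intervalIntegrable_rpow' (a := 0) (b := ε) hβ1).const_mul 2
      rwa [intervalIntegrable_iff_integrableOn_Ioc_of_le hε.le] at h
    have e2 : (∫⁻ b in Set.Ioc (0:ℝ) ε, ENNReal.ofReal (2 * b ^ β1))
        = ENNReal.ofReal (∫ b in Set.Ioc (0:ℝ) ε, 2 * b ^ β1) :=
      (ofReal_integral_eq_lintegral_ofReal hInt1
        ((ae_restrict_iff' measurableSet_Ioc).2
          (ae_of_all _ fun b hb => by
            have hb0 : 0 < b := hb.1
            positivity))).symm
    have e3 : (∫ b in Set.Ioc (0:ℝ) ε, 2 * b ^ β1) = (2/σ) * ε ^ σ := by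
      rw [← intervalIntegral.integral_of_le hε.le, intervalIntegral.integral_const_mul,
        integral_rpow (Or.inl hβ1)]
      have hβσ : β1 + 1 = σ := by rw [hβ1def, hσdef]; ring
      rw [hβσ, Real.zero_rpow hσ.ne']
      ring
    -- piece 2
    have e4 : (∫⁻ b in Set.Ioi ε, ENNReal.ofReal (χ b))
        = ∫⁻ b in Set.Ioi ε, ENNReal.ofReal (1000 * ε^2 * b ^ β2) := by
      apply setLIntegral_congr_fun measurableSet_Ioi
      exact fun b hb => by
        rw [hχdef]; simp only; rw [if_neg (not_le.2 hb)]
    have hInt2 : IntegrableOn (fun b : ℝ => 1000 * ε^2 * b ^ β2) (Set.Ioi ε) :=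
      (integrableOn_Ioi_rpow_of_lt hβ2 hε).const_mul (1000 * ε^2)
    have e5 : (∫⁻ b in Set.Ioi ε, ENNReal.ofReal (1000 * ε^2 * b ^ β2))
        = ENNReal.ofReal (∫ b in Set.Ioi ε, 1000 * ε^2 * b ^ β2) :=
      (ofReal_integral_eq_lintegral_ofReal hInt2
        ((ae_restrict_iff' measurableSet_Ioi).2
          (ae_of_all _ fun b hb => by
            have hb0 : 0 < b := lt_trans hε hb
            positivity))).symm
    have e6 : (∫ b in Set.Ioi ε, 1000 * ε^2 * b ^ β2) ≤ 1000 * ε ^ σ := by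
      rw [MeasureTheory.integral_const_mul, integral_Ioi_rpow_of_lt hβ2 hε]
      have hm : β2 + 1 = -(3/2 + 1/q) := by rw [hβ2def]; ring
      have hq1 : 0 < 1/q := by positivity
      have h32 : (1:ℝ) ≤ 3/2 + 1/q := by linarith
      have hεp : ε^(2:ℕ) * ε^(β2+1) = ε ^ σ := by
        rw [← Real.rpow_natCast ε 2, ← Real.rpow_add hε]
        congr 1
        rw [hσdef, hβ2def]
        push_cast
        ring
      have hεσ : (0:ℝ) ≤ ε ^ σ := Real.rpow_nonneg hε.le σ
      have heq : 1000 * ε^2 * (-ε^(β2+1)/(β2+1))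
          = 1000 * (ε^(2:ℕ) * ε^(β2+1)) * (1/(3/2+1/q)) := by
        rw [hm, neg_div_neg_eq]
        ring
      rw [heq, hεp]
      have hle1 : 1/(3/2+1/q) ≤ 1 := by
        rw [div_le_one (by linarith)]; linarith
      nlinarith
    calc (∫⁻ b in Set.Ioo (0:ℝ) t, ENNReal.ofReal (χ b))
        ≤ (∫⁻ b in Set.Ioc (0:ℝ) ε, ENNReal.ofReal (χ b))
          + ∫⁻ b in Set.Ioi ε, ENNReal.ofReal (χ b) := h8 ▸ h7
      _ ≤ ENNReal.ofReal ((2/σ) * ε ^ σ) + ENNReal.ofReal (1000 * ε ^ σ) := by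
          apply add_le_add
          · rw [e1, e2, e3]
          · rw [e4, e5]; exact ENNReal.ofReal_le_ofReal e6
      _ ≤ ENNReal.ofReal (C * ε ^ σ) := by
          rw [← ENNReal.ofReal_add (by positivity) (by positivity)]
          apply ENNReal.ofReal_le_ofReal
          rw [hCdef]
          exact le_of_eq (by ring)
  -- Step 3 : assembly
  have hFm : Measurable fun p : ℝ × ℝ =>
      (G (t + ε - p.1) (x - p.2) - G (t - p.1) (x - p.2)) ^ 2 * f p.2 ^ 2 := by
    fun_prop
  have hHsm : StronglyMeasurable fun s : ℝ => ∫ y : ℝ,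
      (G (t + ε - s) (x - y) - G (t - s) (x - y)) ^ 2 * f y ^ 2 :=
    hFm.stronglyMeasurable.integral_prod_right'
  have h0 : (∫ s in (0:ℝ)..t, ∫ y : ℝ,
        (G (t + ε - s) (x - y) - G (t - s) (x - y)) ^ 2 * f y ^ 2)
      = ∫ s in Set.Ioc (0:ℝ) t, ∫ y : ℝ,
        (G (t + ε - s) (x - y) - G (t - s) (x - y)) ^ 2 * f y ^ 2 :=
    intervalIntegral.integral_of_le ht.le
  have h1 : (∫ s in Set.Ioc (0:ℝ) t, ∫ y : ℝ,
        (G (t + ε - s) (x - y) - G (t - s) (x - y)) ^ 2 * f y ^ 2)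
      = (∫⁻ s in Set.Ioc (0:ℝ) t, ENNReal.ofReal (∫ y : ℝ,
          (G (t + ε - s) (x - y) - G (t - s) (x - y)) ^ 2 * f y ^ 2)).toReal :=
    integral_eq_lintegral_of_nonneg_ae
      (ae_of_all _ fun s => integral_nonneg fun y => by positivity)
      hHsm.aestronglyMeasurable.restrict
  have h2 : (∫⁻ s in Set.Ioc (0:ℝ) t, ENNReal.ofReal (∫ y : ℝ,
        (G (t + ε - s) (x - y) - G (t - s) (x - y)) ^ 2 * f y ^ 2))
      = ∫⁻ s in Set.Ioo (0:ℝ) t, ENNReal.ofReal (∫ y : ℝ,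
        (G (t + ε - s) (x - y) - G (t - s) (x - y)) ^ 2 * f y ^ 2) := by
    rw [← Measure.restrict_congr_set Ioo_ae_eq_Ioc]
  have h3 : ∀ s ∈ Set.Ioo (0:ℝ) t, ENNReal.ofReal (∫ y : ℝ,
        (G (t + ε - s) (x - y) - G (t - s) (x - y)) ^ 2 * f y ^ 2)
      ≤ ENNReal.ofReal (χ (t - s)) * ENNReal.ofReal A2 := by
    intro s hs
    have hys : AEStronglyMeasurable (fun y : ℝ =>
        (G (t + ε - s) (x - y) - G (t - s) (x - y)) ^ 2 * f y ^ 2) volume :=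
      (hFm.comp (measurable_const.prodMk measurable_id)).aestronglyMeasurable
    rw [integral_eq_lintegral_of_nonneg_ae (ae_of_all _ fun y => by positivity) hys]
    exact le_trans ENNReal.ofReal_toReal_le (key1 s hs)
  have hbm : Measurable fun s : ℝ => ENNReal.ofReal (χ (t - s)) * ENNReal.ofReal A2 :=
    (hχm.comp (measurable_const.sub measurable_id)).mul_const _
  have h4 : (∫⁻ s in Set.Ioo (0:ℝ) t, ENNReal.ofReal (∫ y : ℝ,
        (G (t + ε - s) (x - y) - G (t - s) (x - y)) ^ 2 * f y ^ 2))
      ≤ ENNReal.ofReal (C * A2 * ε ^ σ) := by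
    calc (∫⁻ s in Set.Ioo (0:ℝ) t, ENNReal.ofReal (∫ y : ℝ,
          (G (t + ε - s) (x - y) - G (t - s) (x - y)) ^ 2 * f y ^ 2))
        ≤ ∫⁻ s in Set.Ioo (0:ℝ) t, ENNReal.ofReal (χ (t - s)) * ENNReal.ofReal A2 :=
          setLIntegral_mono hbm h3
      _ = (∫⁻ s in Set.Ioo (0:ℝ) t, ENNReal.ofReal (χ (t - s))) * ENNReal.ofReal A2 :=
          lintegral_mul_const _ (hχm.comp (measurable_const.sub measurable_id))
      _ ≤ ENNReal.ofReal (C * ε ^ σ) * ENNReal.ofReal A2 :=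
          mul_le_mul_left key2 _
      _ = ENNReal.ofReal (C * A2 * ε ^ σ) := by
          rw [← ENNReal.ofReal_mul (by positivity)]
          congr 1
          ring
  rw [h0, h1]
  apply ENNReal.toReal_le_of_le_ofReal
  · have : (0:ℝ) ≤ ε ^ σ := Real.rpow_nonneg hε.le σ
    positivity
  · rw [h2]
    exact h4
end

section
/- Let f ∈ L²(ℝ) be non-negative. Then there exists a universal constant C such that for all t > 0, all ε > 0 and all x ∈ ℝ one has ∫₀^{t} ∫₀^{∞} ∫_ℝ | ∂G_{t−s}/∂v (x−v) | ( ∫_y^{∞} G_ε(v−z) |v−z|^{1/2} dz ) f(y)² dv dy ds ≤ C ‖f‖²_{L²(ℝ)} t^{1/2} ε^{1/4}. -/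
open MeasureTheory Real Filter

open Set

lemma int_abs_gauss {b : ℝ} (hb : 0 < b) :
    ∫ u : ℝ, |u| * Real.exp (-b * u ^ 2) = b⁻¹ := by
  have key := integral_comp_abs (f := fun x : ℝ => x * Real.exp (-b * x ^ 2))
  simp only [sq_abs] at key
  rw [key]
  have h2 : ∫ x in Ioi (0:ℝ), x * Real.exp (-b * x ^ 2)
      = ∫ x in Ioi (0:ℝ), x ^ (1:ℝ) * Real.exp (-b * x ^ (2:ℝ)) := by
    refine setIntegral_congr_fun measurableSet_Ioi (fun x hx => ?_)
    rw [rpow_one, rpow_two]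
  rw [h2, integral_rpow_mul_exp_neg_mul_rpow (by norm_num) (by norm_num) hb,
    show ((1:ℝ)+1)/2 = 1 by norm_num, Real.Gamma_one]
  rw [show (-(1 + 1) / 2 : ℝ) = -1 by norm_num, rpow_neg_one]
  ring

lemma integrable_abs_gauss {b : ℝ} (hb : 0 < b) :
    Integrable (fun u : ℝ => |u| * Real.exp (-b * u ^ 2)) := by
  have := (integrable_mul_exp_neg_mul_sq hb).abs
  refine this.congr (Eventually.of_forall fun u => ?_)
  simp [abs_mul, abs_of_pos (exp_pos _)]

lemma four_rpow_half : (4:ℝ) ^ ((1:ℝ)/2) = 2 := by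
  rw [show (4:ℝ) = 2 ^ (2:ℕ) by norm_num, ← rpow_natCast 2 2, ← rpow_mul (by norm_num)]
  norm_num

-- G basics
lemma G_eq {ε : ℝ} (w : ℝ) :
    G ε w = (4 * π * ε) ^ (-(1:ℝ)/2) * Real.exp (-(4*ε)⁻¹ * w ^ 2) := by
  unfold G
  congr 1
  rw [show -w ^ 2 / (4 * ε) = -(4*ε)⁻¹ * w ^ 2 by ring]

lemma c_pos {ε : ℝ} (hε : 0 < ε) : 0 < (4 * π * ε) ^ (-(1:ℝ)/2) :=
  rpow_pos_of_pos (by positivity) _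

lemma G_nonneg_s14 {ε : ℝ} (hε : 0 < ε) (w : ℝ) : 0 ≤ G ε w := by
  rw [G_eq]
  exact mul_nonneg (c_pos hε).le (exp_pos _).le

lemma c_le {ε : ℝ} (hε : 0 < ε) :
    (4 * π * ε) ^ (-(1:ℝ)/2) ≤ (4 * ε) ^ (-(1:ℝ)/2) := by
  refine rpow_le_rpow_of_nonpos (by positivity) ?_ (by norm_num)
  nlinarith [pi_gt_three, hε.le]

lemma G_integrable {ε : ℝ} (hε : 0 < ε) : Integrable (G ε) := by
  have hb : 0 < (4*ε)⁻¹ := by positivity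
  have := (integrable_exp_neg_mul_sq hb).const_mul ((4 * π * ε) ^ (-(1:ℝ)/2))
  exact this.congr (Eventually.of_forall fun w => (G_eq w).symm)

lemma G_int_one {ε : ℝ} (hε : 0 < ε) : ∫ w : ℝ, G ε w = 1 := by
  have hb : 0 < (4*ε)⁻¹ := by positivity
  have h1 : ∫ w : ℝ, G ε w
      = (4 * π * ε) ^ (-(1:ℝ)/2) * ∫ w : ℝ, Real.exp (-(4*ε)⁻¹ * w ^ 2) := by
    rw [← integral_const_mul]
    exact integral_congr_ae (Eventually.of_forall fun w => G_eq w)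
  rw [h1, integral_gaussian, show π / (4*ε)⁻¹ = 4 * π * ε by field_simp,
    sqrt_eq_rpow, ← rpow_add (by positivity : (0:ℝ) < 4 * π * ε)]
  norm_num

lemma G_abs_integrable {ε : ℝ} (hε : 0 < ε) :
    Integrable (fun w : ℝ => G ε w * |w|) := by
  have hb : 0 < (4*ε)⁻¹ := by positivity
  have := (integrable_abs_gauss hb).const_mul ((4 * π * ε) ^ (-(1:ℝ)/2))
  refine this.congr (Eventually.of_forall fun w => ?_)
  simp only []
  rw [G_eq]; ring

lemma G_abs_int_le {ε : ℝ} (hε : 0 < ε) :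
    ∫ w : ℝ, G ε w * |w| ≤ 2 * ε ^ ((1:ℝ)/2) := by
  have hb : 0 < (4*ε)⁻¹ := by positivity
  have h1 : ∫ w : ℝ, G ε w * |w|
      = (4 * π * ε) ^ (-(1:ℝ)/2) * ∫ w : ℝ, |w| * Real.exp (-(4*ε)⁻¹ * w ^ 2) := by
    rw [← integral_const_mul]
    refine integral_congr_ae (Eventually.of_forall fun w => ?_)
    simp only []
    rw [G_eq]; ring
  rw [h1, int_abs_gauss hb, inv_inv]
  calc (4 * π * ε) ^ (-(1:ℝ)/2) * (4 * ε)
      ≤ (4 * ε) ^ (-(1:ℝ)/2) * (4 * ε) :=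
        mul_le_mul_of_nonneg_right (c_le hε) (by positivity)
    _ = (4 * ε) ^ ((1:ℝ)/2) := by
        nth_rewrite 2 [show (4:ℝ) * ε = (4*ε) ^ (1:ℝ) by rw [rpow_one]]
        rw [← rpow_add (by positivity : (0:ℝ) < 4*ε)]
        norm_num
    _ = 2 * ε ^ ((1:ℝ)/2) := by
        rw [mul_rpow (by norm_num) hε.le, four_rpow_half]

lemma sqrt_split {ε a : ℝ} (hε : 0 < ε) (ha : 0 ≤ a) :
    a ^ ((1:ℝ)/2) ≤ ε ^ ((1:ℝ)/4) + ε ^ (-(1:ℝ)/4) * a := by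
  have h14 : (ε ^ ((1:ℝ)/2)) ^ ((1:ℝ)/2) = ε ^ ((1:ℝ)/4) := by
    rw [← rpow_mul hε.le]; norm_num
  rcases le_or_gt a (ε ^ ((1:ℝ)/2)) with h | h
  · have h1 : a ^ ((1:ℝ)/2) ≤ ε ^ ((1:ℝ)/4) := by
      rw [← h14]; exact rpow_le_rpow ha h (by norm_num)
    have h2 : 0 ≤ ε ^ (-(1:ℝ)/4) * a := mul_nonneg (rpow_nonneg hε.le _) ha
    linarith
  · have ha' : 0 < a := (rpow_pos_of_pos hε _).trans h
    have h2 : a ^ (-(1:ℝ)/2) ≤ (ε ^ ((1:ℝ)/2)) ^ (-(1:ℝ)/2) :=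
      rpow_le_rpow_of_nonpos (rpow_pos_of_pos hε _) h.le (by norm_num)
    have h3 : (ε ^ ((1:ℝ)/2)) ^ (-(1:ℝ)/2) = ε ^ (-(1:ℝ)/4) := by
      rw [← rpow_mul hε.le]; norm_num
    have h4 : a ^ ((1:ℝ)/2) = a ^ (-(1:ℝ)/2) * a := by
      nth_rewrite 3 [show a = a ^ (1:ℝ) by rw [rpow_one]]
      rw [← rpow_add ha']; norm_num
    have h5 : a ^ (-(1:ℝ)/2) * a ≤ ε ^ (-(1:ℝ)/4) * a :=
      mul_le_mul_of_nonneg_right (h2.trans_eq h3) ha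
    have h6 : 0 ≤ ε ^ ((1:ℝ)/4) := rpow_nonneg hε.le _
    linarith [h4 ▸ h5]

lemma G_continuous {ε : ℝ} : Continuous (G ε) := by
  unfold G
  exact continuous_const.mul ((continuous_id.pow 2).neg.div_const _).rexp

lemma H_integrable {ε : ℝ} (hε : 0 < ε) :
    Integrable (fun w : ℝ => G ε w * |w| ^ ((1:ℝ)/2)) := by
  refine Integrable.mono' ((G_integrable hε).add (G_abs_integrable hε)) ?_
    (Eventually.of_forall fun w => ?_)
  · exact (G_continuous.mul
      (continuous_abs.rpow_const fun x => Or.inr (by norm_num))).aestronglyMeasurable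
  · have h0 : 0 ≤ G ε w * |w| ^ ((1:ℝ)/2) :=
      mul_nonneg (G_nonneg_s14 hε w) (rpow_nonneg (abs_nonneg w) _)
    rw [Real.norm_eq_abs, abs_of_nonneg h0]
    have h1 : |w| ^ ((1:ℝ)/2) ≤ 1 + |w| := by
      rcases le_or_gt (|w|) 1 with h | h
      · have := rpow_le_one (abs_nonneg w) h (by norm_num : (0:ℝ) ≤ 1/2)
        linarith [abs_nonneg w]
      · have : |w| ^ ((1:ℝ)/2) ≤ |w| ^ (1:ℝ) :=
          rpow_le_rpow_of_exponent_le h.le (by norm_num)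
        rw [rpow_one] at this
        linarith
    calc G ε w * |w| ^ ((1:ℝ)/2) ≤ G ε w * (1 + |w|) :=
          mul_le_mul_of_nonneg_left h1 (G_nonneg_s14 hε w)
      _ = G ε w + G ε w * |w| := by ring

lemma H_int_le {ε : ℝ} (hε : 0 < ε) :
    ∫ w : ℝ, G ε w * |w| ^ ((1:ℝ)/2) ≤ 3 * ε ^ ((1:ℝ)/4) := by
  have hmono : ∫ w : ℝ, G ε w * |w| ^ ((1:ℝ)/2)
      ≤ ∫ w : ℝ, (ε ^ ((1:ℝ)/4) * G ε w + ε ^ (-(1:ℝ)/4) * (G ε w * |w|)) := by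
    refine integral_mono (H_integrable hε)
      (((G_integrable hε).const_mul _).add ((G_abs_integrable hε).const_mul _)) fun w => ?_
    have := sqrt_split hε (abs_nonneg w)
    calc G ε w * |w| ^ ((1:ℝ)/2)
        ≤ G ε w * (ε ^ ((1:ℝ)/4) + ε ^ (-(1:ℝ)/4) * |w|) :=
          mul_le_mul_of_nonneg_left this (G_nonneg_s14 hε w)
      _ = ε ^ ((1:ℝ)/4) * G ε w + ε ^ (-(1:ℝ)/4) * (G ε w * |w|) := by ring
  have hadd : ∫ w : ℝ, (ε ^ ((1:ℝ)/4) * G ε w + ε ^ (-(1:ℝ)/4) * (G ε w * |w|))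
      = ε ^ ((1:ℝ)/4) * (∫ w : ℝ, G ε w)
        + ε ^ (-(1:ℝ)/4) * (∫ w : ℝ, G ε w * |w|) := by
    rw [integral_add ((G_integrable hε).const_mul _) ((G_abs_integrable hε).const_mul _),
      integral_const_mul, integral_const_mul]
  have h2 : ε ^ (-(1:ℝ)/4) * (∫ w : ℝ, G ε w * |w|)
      ≤ ε ^ (-(1:ℝ)/4) * (2 * ε ^ ((1:ℝ)/2)) :=
    mul_le_mul_of_nonneg_left (G_abs_int_le hε) (rpow_nonneg hε.le _)
  have h3 : ε ^ (-(1:ℝ)/4) * (2 * ε ^ ((1:ℝ)/2)) = 2 * ε ^ ((1:ℝ)/4) := by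
    rw [show ε ^ (-(1:ℝ)/4) * (2 * ε ^ ((1:ℝ)/2)) = 2 * (ε ^ (-(1:ℝ)/4) * ε ^ ((1:ℝ)/2)) by ring,
      ← rpow_add hε]
    norm_num
  rw [G_int_one hε] at hadd
  calc ∫ w : ℝ, G ε w * |w| ^ ((1:ℝ)/2)
      ≤ ε ^ ((1:ℝ)/4) * 1 + ε ^ (-(1:ℝ)/4) * (∫ w : ℝ, G ε w * |w|) := hmono.trans_eq hadd
    _ ≤ ε ^ ((1:ℝ)/4) * 1 + 2 * ε ^ ((1:ℝ)/4) := by linarith [h2, h3]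
    _ = 3 * ε ^ ((1:ℝ)/4) := by ring

lemma inner_integrable {ε : ℝ} (hε : 0 < ε) (v : ℝ) :
    Integrable (fun z : ℝ => G ε (v - z) * |v - z| ^ ((1:ℝ)/2)) :=
  (integrable_comp_sub_left (fun w => G ε w * |w| ^ ((1:ℝ)/2)) v).mpr (H_integrable hε)

lemma inner_bound {ε : ℝ} (hε : 0 < ε) (v y : ℝ) :
    ∫ z in Ioi y, G ε (v - z) * |v - z| ^ ((1:ℝ)/2) ≤ 3 * ε ^ ((1:ℝ)/4) := by
  have h1 : ∫ z in Ioi y, G ε (v - z) * |v - z| ^ ((1:ℝ)/2)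
      ≤ ∫ z : ℝ, G ε (v - z) * |v - z| ^ ((1:ℝ)/2) :=
    setIntegral_le_integral (inner_integrable hε v)
      (Eventually.of_forall fun z =>
        mul_nonneg (G_nonneg_s14 hε _) (rpow_nonneg (abs_nonneg _) _))
  have h2 : ∫ z : ℝ, G ε (v - z) * |v - z| ^ ((1:ℝ)/2)
      = ∫ w : ℝ, G ε w * |w| ^ ((1:ℝ)/2) :=
    integral_sub_left_eq_self (fun w => G ε w * |w| ^ ((1:ℝ)/2)) volume v
  exact h1.trans (h2 ▸ H_int_le hε)

lemma inner_nonneg {ε : ℝ} (hε : 0 < ε) (v y : ℝ) :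
    0 ≤ ∫ z in Ioi y, G ε (v - z) * |v - z| ^ ((1:ℝ)/2) :=
  setIntegral_nonneg measurableSet_Ioi fun z _ =>
    mul_nonneg (G_nonneg_s14 hε _) (rpow_nonneg (abs_nonneg _) _)

lemma G_deriv {τ : ℝ} (u : ℝ) :
    deriv (G τ) u
      = (4 * π * τ) ^ (-(1:ℝ)/2) * (Real.exp (-u ^ 2 / (4 * τ)) * (-(2 * u) / (4 * τ))) := by
  have h : HasDerivAt (fun x : ℝ => -x ^ 2 / (4 * τ)) (-(2 * u) / (4 * τ)) u := by
    have h0 := ((hasDerivAt_pow 2 u).neg).div_const (4 * τ)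
    refine HasDerivAt.congr_deriv h0 ?_
    push_cast
    ring
  have h2 := (h.exp.const_mul ((4 * π * τ) ^ (-(1:ℝ)/2)))
  exact h2.deriv

lemma abs_G_deriv {τ : ℝ} (hτ : 0 < τ) (u : ℝ) :
    |deriv (G τ) u|
      = (4 * π * τ) ^ (-(1:ℝ)/2) / (2 * τ) * (|u| * Real.exp (-(4*τ)⁻¹ * u ^ 2)) := by
  rw [G_deriv]
  have hc : (0:ℝ) < (4 * π * τ) ^ (-(1:ℝ)/2) := rpow_pos_of_pos (by positivity) _
  rw [abs_mul, abs_mul, abs_of_pos hc, abs_of_pos (exp_pos _), abs_div, abs_neg, abs_mul,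
    abs_two, abs_of_pos (by positivity : (0:ℝ) < 4 * τ),
    show -u ^ 2 / (4 * τ) = -(4*τ)⁻¹ * u ^ 2 by ring]
  field_simp
  ring

lemma D_integrable {τ : ℝ} (hτ : 0 < τ) :
    Integrable (fun u : ℝ => |deriv (G τ) u|) := by
  have hb : 0 < (4*τ)⁻¹ := by positivity
  have := (integrable_abs_gauss hb).const_mul ((4 * π * τ) ^ (-(1:ℝ)/2) / (2 * τ))
  exact this.congr (Eventually.of_forall fun u => (abs_G_deriv hτ u).symm)

lemma D_int_le {τ : ℝ} (hτ : 0 < τ) :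
    ∫ u : ℝ, |deriv (G τ) u| ≤ τ ^ (-(1:ℝ)/2) := by
  have hb : 0 < (4*τ)⁻¹ := by positivity
  have h1 : ∫ u : ℝ, |deriv (G τ) u|
      = (4 * π * τ) ^ (-(1:ℝ)/2) / (2 * τ) * ∫ u : ℝ, |u| * Real.exp (-(4*τ)⁻¹ * u ^ 2) := by
    rw [← integral_const_mul]
    exact integral_congr_ae (Eventually.of_forall fun u => abs_G_deriv hτ u)
  rw [h1, int_abs_gauss hb, inv_inv]
  have h2 : (4 * π * τ) ^ (-(1:ℝ)/2) / (2 * τ) * (4 * τ)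
      = 2 * (4 * π * τ) ^ (-(1:ℝ)/2) := by field_simp; ring
  rw [h2]
  have h3 : (4 * τ) ^ (-(1:ℝ)/2) = (1/2) * τ ^ (-(1:ℝ)/2) := by
    rw [mul_rpow (by norm_num) hτ.le]
    congr 1
    rw [show (-(1:ℝ)/2) = -((1:ℝ)/2) by norm_num, rpow_neg (by norm_num : (0:ℝ) ≤ 4),
      four_rpow_half]
    norm_num
  have := c_le hτ
  rw [h3] at this
  linarith
lemma Dx_integrable {τ : ℝ} (hτ : 0 < τ) (x : ℝ) :
    Integrable (fun v : ℝ => |deriv (G τ) (x - v)|) :=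
  (integrable_comp_sub_left (fun u => |deriv (G τ) u|) x).mpr (D_integrable hτ)

lemma Dx_int_le {τ : ℝ} (hτ : 0 < τ) (x : ℝ) :
    ∫ v : ℝ, |deriv (G τ) (x - v)| ≤ τ ^ (-(1:ℝ)/2) := by
  have h := integral_sub_left_eq_self (fun u => |deriv (G τ) u|) volume x
  exact h.trans_le (D_int_le hτ)

lemma rpow_int_Ioc {t : ℝ} (ht : 0 < t) :
    ∫ s in Ioc (0:ℝ) t, (t - s) ^ (-(1:ℝ)/2) = 2 * t ^ ((1:ℝ)/2) := by
  rw [← intervalIntegral.integral_of_le ht.le,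
    intervalIntegral.integral_comp_sub_left (fun u => u ^ (-(1:ℝ)/2)) t]
  simp only [sub_self, sub_zero]
  rw [integral_rpow (Or.inl (by norm_num))]
  rw [show (-(1:ℝ)/2 + 1) = (1:ℝ)/2 by norm_num, zero_rpow (by norm_num : ((1:ℝ)/2) ≠ 0)]
  ring

lemma rpow_integrableOn_Ioc {t : ℝ} (ht : 0 < t) :
    IntegrableOn (fun s : ℝ => (t - s) ^ (-(1:ℝ)/2)) (Ioc 0 t) := by
  have h1 : IntervalIntegrable (fun u : ℝ => u ^ (-(1:ℝ)/2)) volume 0 t :=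
    intervalIntegral.intervalIntegrable_rpow' (by norm_num)
  have h2 := (h1.comp_sub_left t).symm
  simp only [sub_self, sub_zero] at h2
  exact (intervalIntegrable_iff_integrableOn_Ioc_of_le ht.le).mp h2

theorem heat_kernel_derivative_mollification_estimate
    (f : ℝ → ℝ) (hfm : Measurable f) (hf0 : ∀ y, 0 ≤ f y)
    (hf2 : MeasureTheory.Integrable (fun y => f y ^ 2)) :
    ∃ C : ℝ, 0 < C ∧ ∀ t ε x : ℝ, 0 < t → 0 < ε →
      ∫ s in (0:ℝ)..t, ∫ y in Set.Ioi (0:ℝ), ∫ v : ℝ,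
          |deriv (G (t - s)) (x - v)|
            * (∫ z in Set.Ioi y, G ε (v - z) * |v - z| ^ ((1:ℝ)/2)) * f y ^ 2
        ≤ C * (∫ y : ℝ, f y ^ 2) * t ^ ((1:ℝ)/2) * ε ^ ((1:ℝ)/4) := by
  refine ⟨6, by norm_num, fun t ε x ht hε => ?_⟩
  set I : ℝ := ∫ y : ℝ, f y ^ 2 with hI
  have hI0 : 0 ≤ I := integral_nonneg fun y => sq_nonneg _
  have hf2' : ∀ y, (0:ℝ) ≤ f y ^ 2 := fun y => sq_nonneg _
  have hε4 : (0:ℝ) ≤ ε ^ ((1:ℝ)/4) := rpow_nonneg hε.le _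
  -- the key pointwise (in s) bound
  have key : ∀ s : ℝ, s ≤ t →
      (∫ y in Ioi (0:ℝ), ∫ v : ℝ,
          |deriv (G (t - s)) (x - v)|
            * (∫ z in Ioi y, G ε (v - z) * |v - z| ^ ((1:ℝ)/2)) * f y ^ 2)
        ≤ 3 * ε ^ ((1:ℝ)/4) * I * (t - s) ^ (-(1:ℝ)/2) := by
    intro s hs
    rcases eq_or_lt_of_le (sub_nonneg.mpr hs) with hτ0 | hτ
    · -- τ = 0 : both sides vanish
      have hG0 : G (t - s) = fun _ => (0:ℝ) := by
        funext w
        rw [← hτ0]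
        simp [G, zero_rpow (by norm_num : (-(1:ℝ)/2) ≠ 0)]
      have hzero : ∀ y : ℝ, (∫ v : ℝ,
          |deriv (G (t - s)) (x - v)|
            * (∫ z in Ioi y, G ε (v - z) * |v - z| ^ ((1:ℝ)/2)) * f y ^ 2) = 0 := by
        intro y
        simp [hG0]
      rw [show (3:ℝ) * ε ^ ((1:ℝ)/4) * I * (t - s) ^ (-(1:ℝ)/2)
          = 3 * ε ^ ((1:ℝ)/4) * I * (0:ℝ) ^ (-(1:ℝ)/2) by rw [← hτ0]]
      rw [zero_rpow (by norm_num : (-(1:ℝ)/2) ≠ 0), mul_zero]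
      simp only [hzero, integral_zero]
      exact le_refl 0
    · -- τ > 0
      set K : ℝ := 3 * ε ^ ((1:ℝ)/4) * (t - s) ^ (-(1:ℝ)/2) with hK
      have hK0 : 0 ≤ K := by positivity
      have step1 : ∀ y : ℝ, (∫ v : ℝ,
          |deriv (G (t - s)) (x - v)|
            * (∫ z in Ioi y, G ε (v - z) * |v - z| ^ ((1:ℝ)/2)) * f y ^ 2)
          ≤ K * f y ^ 2 := by
        intro y
        rw [integral_mul_const]
        refine mul_le_mul_of_nonneg_right ?_ (hf2' y)
        have hmono : (∫ v : ℝ, |deriv (G (t - s)) (x - v)|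
              * (∫ z in Ioi y, G ε (v - z) * |v - z| ^ ((1:ℝ)/2)))
            ≤ ∫ v : ℝ, |deriv (G (t - s)) (x - v)| * (3 * ε ^ ((1:ℝ)/4)) :=
          integral_mono_of_nonneg
            (Eventually.of_forall fun v =>
              mul_nonneg (abs_nonneg _) (inner_nonneg hε v y))
            ((Dx_integrable hτ x).mul_const _)
            (Eventually.of_forall fun v =>
              mul_le_mul_of_nonneg_left (inner_bound hε v y) (abs_nonneg _))
        rw [integral_mul_const] at hmono
        refine hmono.trans ?_
        have h5 : (∫ v : ℝ, |deriv (G (t - s)) (x - v)|) * (3 * ε ^ ((1:ℝ)/4))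
            ≤ (t - s) ^ (-(1:ℝ)/2) * (3 * ε ^ ((1:ℝ)/4)) :=
          mul_le_mul_of_nonneg_right (Dx_int_le hτ x) (by positivity)
        refine h5.trans_eq ?_
        rw [hK]; ring
      have step2 : (∫ y in Ioi (0:ℝ), ∫ v : ℝ,
          |deriv (G (t - s)) (x - v)|
            * (∫ z in Ioi y, G ε (v - z) * |v - z| ^ ((1:ℝ)/2)) * f y ^ 2)
          ≤ ∫ y in Ioi (0:ℝ), K * f y ^ 2 :=
        integral_mono_of_nonneg
          (Eventually.of_forall fun y => integral_nonneg fun v =>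
            mul_nonneg (mul_nonneg (abs_nonneg _) (inner_nonneg hε v y)) (hf2' y))
          ((hf2.const_mul K).integrableOn)
          (Eventually.of_forall step1)
      have step3 : ∫ y in Ioi (0:ℝ), K * f y ^ 2 = K * ∫ y in Ioi (0:ℝ), f y ^ 2 :=
        integral_const_mul K _
      have step4 : (∫ y in Ioi (0:ℝ), f y ^ 2) ≤ I :=
        setIntegral_le_integral hf2 (Eventually.of_forall hf2')
      have step5 : K * (∫ y in Ioi (0:ℝ), f y ^ 2) ≤ K * I :=
        mul_le_mul_of_nonneg_left step4 hK0
      refine (step2.trans_eq step3).trans (step5.trans_eq ?_)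
      rw [hK]; ring
  -- outer integral in s
  rw [intervalIntegral.integral_of_le ht.le]
  have houter : (∫ s in Ioc (0:ℝ) t, ∫ y in Ioi (0:ℝ), ∫ v : ℝ,
      |deriv (G (t - s)) (x - v)|
        * (∫ z in Ioi y, G ε (v - z) * |v - z| ^ ((1:ℝ)/2)) * f y ^ 2)
      ≤ ∫ s in Ioc (0:ℝ) t, 3 * ε ^ ((1:ℝ)/4) * I * (t - s) ^ (-(1:ℝ)/2) := by
    refine integral_mono_of_nonneg
      (Eventually.of_forall fun s => setIntegral_nonneg measurableSet_Ioi fun y _ =>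
        integral_nonneg fun v =>
          mul_nonneg (mul_nonneg (abs_nonneg _) (inner_nonneg hε v y)) (hf2' y))
      ((rpow_integrableOn_Ioc ht).const_mul (3 * ε ^ ((1:ℝ)/4) * I)) ?_
    filter_upwards [ae_restrict_mem measurableSet_Ioc] with s hs
    exact key s hs.2
  refine houter.trans ?_
  rw [integral_const_mul, rpow_int_Ioc ht]
  ring_nf
  exact le_refl _
end

section
/- Let u₀ : ℝ → ℝ be continuous, bounded and integrable, let ψ₀(x) = exp( −½ ∫₀^x u₀(y) dy ), so that ψ₀′ = −½ u₀ ψ₀, and for ε > 0 define u_ε(x) = −2 (G_ε * ψ₀′)(x) / (G_ε * ψ₀)(x). Then: (i) sup_{x∈ℝ, ε>0} |u_ε(x)| ≤ ‖u₀‖_{∞} exp(‖u₀‖_{L¹(ℝ)}); (ii) for every x ∈ ℝ, u_ε(x) → u₀(x) as ε → 0⁺; and (iii) for every t > 0 and x ∈ ℝ, ∫_ℝ G_t(x−y) u_ε(y) dy → ∫_ℝ G_t(x−y) u₀(y) dy as ε → 0⁺. -/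
open MeasureTheory Real Filter

/-- `ψ₀(x) = exp(-½ ∫₀ˣ u₀(y) dy)`, with the signed-interval convention for `x < 0`. -/
noncomputable def psi0 (u₀ : ℝ → ℝ) (x : ℝ) : ℝ :=
  Real.exp (-(1/2) * ∫ y in (0:ℝ)..x, u₀ y)

/-- `ψ₀′ = -½ u₀ ψ₀`. -/
noncomputable def psi0' (u₀ : ℝ → ℝ) (x : ℝ) : ℝ :=
  -(1/2) * u₀ x * psi0 u₀ x

/-- `u_ε(x) = -2 (G_ε * ψ₀′)(x) / (G_ε * ψ₀)(x)`. -/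
noncomputable def uEps (u₀ : ℝ → ℝ) (ε x : ℝ) : ℝ :=
  -2 * (∫ y : ℝ, G ε (x - y) * psi0' u₀ y) / (∫ y : ℝ, G ε (x - y) * psi0 u₀ y)

/-! ### Auxiliary gaussian weight -/

/-- Normalized gaussian weight `π^(-1/2) exp(-z²)`. -/
noncomputable def gw (z : ℝ) : ℝ := Real.pi ^ (-(1:ℝ)/2) * Real.exp (-z ^ 2)

lemma gw_nonneg (z : ℝ) : 0 ≤ gw z := by
  unfold gw
  have := Real.pi_pos
  positivity

lemma gw_cont : Continuous gw := by
  unfold gw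
  exact continuous_const.mul (Real.continuous_exp.comp (continuous_pow 2).neg)

lemma gw_integrable : Integrable gw := by
  have h : Integrable (fun z : ℝ => Real.exp (-1 * z ^ 2)) := integrable_exp_neg_mul_sq one_pos
  unfold gw
  simpa [gw, neg_mul, one_mul] using h.const_mul (Real.pi ^ (-(1:ℝ)/2))

lemma gw_integral : (∫ z : ℝ, gw z) = 1 := by
  unfold gw
  rw [MeasureTheory.integral_const_mul]
  have h : (∫ z : ℝ, Real.exp (-z ^ 2)) = Real.sqrt Real.pi := by
    have := integral_gaussian 1
    simpa [neg_mul, one_mul] using this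
  rw [h]
  have hpi : (0:ℝ) ≤ Real.pi := Real.pi_pos.le
  rw [show (-(1:ℝ)/2) = -(1/2 : ℝ) by norm_num, Real.rpow_neg hpi, ← Real.sqrt_eq_rpow]
  exact inv_mul_cancel₀ (Real.sqrt_ne_zero'.mpr Real.pi_pos)

/-- Change of variables: for `ε > 0`,
`∫ G ε (x-y) f(y) dy = ∫ gw(z) f(x - 2√ε z) dz`. -/
lemma conv_eq (f : ℝ → ℝ) {ε : ℝ} (hε : 0 < ε) (x : ℝ) :
    (∫ y : ℝ, G ε (x - y) * f y) = ∫ z : ℝ, gw z * f (x - 2 * Real.sqrt ε * z) := by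
  set c := 2 * Real.sqrt ε with hc
  have hcpos : 0 < c := by
    have := Real.sqrt_pos.mpr hε
    positivity
  have h1 : (∫ y : ℝ, G ε (x - y) * f y) = ∫ y : ℝ, G ε y * f (x - y) := by
    rw [← integral_sub_left_eq_self (fun y => G ε y * f (x - y)) volume x]
    congr 1; funext y; simp
  have key : ∀ z : ℝ, c * G ε (c * z) = gw z := by
    intro z
    have hc2 : c ^ 2 = 4 * ε := by
      rw [hc, mul_pow, Real.sq_sqrt hε.le]; ring
    have hexp : -(c * z) ^ 2 / (4 * ε) = -z ^ 2 := by
      rw [mul_pow, hc2]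
      field_simp
    have hcoef : (4 * Real.pi * ε) ^ (-(1:ℝ)/2) = Real.pi ^ (-(1:ℝ)/2) * c⁻¹ := by
      rw [show (4 * Real.pi * ε) = Real.pi * (4 * ε) by ring,
        Real.mul_rpow Real.pi_pos.le (by positivity)]
      congr 1
      rw [show (-(1:ℝ)/2) = -(1/2 : ℝ) by norm_num, Real.rpow_neg (by positivity),
        ← Real.sqrt_eq_rpow]
      congr 1
      rw [show (4 * ε : ℝ) = 2 ^ 2 * ε by ring, Real.sqrt_mul (by positivity),
        Real.sqrt_sq (by norm_num)]
    unfold G gw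
    rw [hexp, hcoef]
    field_simp
  rw [h1]
  have h2 := MeasureTheory.Measure.integral_comp_mul_left
    (fun y => G ε y * f (x - y)) c
  have h3 : (∫ y : ℝ, G ε y * f (x - y))
      = c * ∫ z : ℝ, G ε (c * z) * f (x - c * z) := by
    rw [h2, abs_of_pos (inv_pos.mpr hcpos), smul_eq_mul, ← mul_assoc,
      mul_inv_cancel₀ hcpos.ne', one_mul]
  rw [h3, ← MeasureTheory.integral_const_mul]
  congr 1; funext z
  rw [← mul_assoc, key z]

section cv

variable {f : ℝ → ℝ} {A : ℝ}

lemma cv_integrable (hf : Continuous f) (hA : ∀ y, |f y| ≤ A) (c x : ℝ) :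
    Integrable (fun z : ℝ => gw z * f (x - c * z)) := by
  apply (gw_integrable.mul_const A).mono'
  · exact (gw_cont.mul (hf.comp (continuous_const.sub
      (continuous_const.mul continuous_id)))).aestronglyMeasurable
  · filter_upwards with z
    rw [Real.norm_eq_abs, abs_mul, abs_of_nonneg (gw_nonneg z)]
    exact mul_le_mul_of_nonneg_left (hA _) (gw_nonneg z)

lemma cv_abs_le (hf : Continuous f) (hA : ∀ y, |f y| ≤ A) (c x : ℝ) :
    |∫ z : ℝ, gw z * f (x - c * z)| ≤ A := by
  have h1 : |∫ z : ℝ, gw z * f (x - c * z)| ≤ ∫ z : ℝ, |gw z * f (x - c * z)| := by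
    have := norm_integral_le_integral_norm (μ := volume) (fun z : ℝ => gw z * f (x - c * z))
    simp only [Real.norm_eq_abs] at this
    exact this
  refine h1.trans ?_
  have h2 : (∫ z : ℝ, |gw z * f (x - c * z)|) ≤ ∫ z : ℝ, gw z * A := by
    refine integral_mono (cv_integrable hf hA c x).abs (gw_integrable.mul_const A) ?_
    intro z
    show |gw z * f (x - c * z)| ≤ gw z * A
    rw [abs_mul, abs_of_nonneg (gw_nonneg z)]
    exact mul_le_mul_of_nonneg_left (hA _) (gw_nonneg z)
  refine h2.trans ?_
  rw [MeasureTheory.integral_mul_const, gw_integral, one_mul]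

lemma cv_lower (hf : Continuous f) (hA : ∀ y, |f y| ≤ A) {m : ℝ} (hm : ∀ y, m ≤ f y)
    (c x : ℝ) : m ≤ ∫ z : ℝ, gw z * f (x - c * z) := by
  have h1 : (∫ z : ℝ, gw z * m) ≤ ∫ z : ℝ, gw z * f (x - c * z) := by
    refine integral_mono (gw_integrable.mul_const m) (cv_integrable hf hA c x) ?_
    intro z
    show gw z * m ≤ gw z * f (x - c * z)
    exact mul_le_mul_of_nonneg_left (hm _) (gw_nonneg z)
  rwa [MeasureTheory.integral_mul_const, gw_integral, one_mul] at h1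

lemma cv_cont (hf : Continuous f) (hA : ∀ y, |f y| ≤ A) (c : ℝ) :
    Continuous (fun x : ℝ => ∫ z : ℝ, gw z * f (x - c * z)) := by
  apply continuous_of_dominated (bound := fun z => gw z * A)
  · intro x
    exact (gw_cont.mul (hf.comp (continuous_const.sub
      (continuous_const.mul continuous_id)))).aestronglyMeasurable
  · intro x
    filter_upwards with z
    rw [Real.norm_eq_abs, abs_mul, abs_of_nonneg (gw_nonneg z)]
    exact mul_le_mul_of_nonneg_left (hA _) (gw_nonneg z)
  · exact gw_integrable.mul_const A
  · filter_upwards with z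
    exact continuous_const.mul (hf.comp (continuous_id.sub continuous_const))

lemma cv_tendsto (hf : Continuous f) (hA : ∀ y, |f y| ≤ A) (x : ℝ) :
    Tendsto (fun ε : ℝ => ∫ z : ℝ, gw z * f (x - 2 * Real.sqrt ε * z))
      (nhdsWithin 0 (Set.Ioi 0)) (nhds (f x)) := by
  have hfx : f x = ∫ z : ℝ, gw z * f x := by
    rw [MeasureTheory.integral_mul_const, gw_integral, one_mul]
  rw [hfx]
  apply tendsto_integral_filter_of_dominated_convergence (bound := fun z => gw z * A)
  · filter_upwards with ε
    exact (gw_cont.mul (hf.comp (continuous_const.sub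
      (continuous_const.mul continuous_id)))).aestronglyMeasurable
  · filter_upwards with ε
    filter_upwards with z
    rw [Real.norm_eq_abs, abs_mul, abs_of_nonneg (gw_nonneg z)]
    exact mul_le_mul_of_nonneg_left (hA _) (gw_nonneg z)
  · exact gw_integrable.mul_const A
  · filter_upwards with z
    have h1 : Tendsto (fun ε : ℝ => x - 2 * Real.sqrt ε * z) (nhdsWithin 0 (Set.Ioi 0))
        (nhds x) := by
      have hco : Continuous fun ε : ℝ => x - 2 * Real.sqrt ε * z := by
        exact continuous_const.sub ((continuous_const.mul Real.continuous_sqrt).mul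
          continuous_const)
      have h0 : Tendsto (fun ε : ℝ => x - 2 * Real.sqrt ε * z) (nhds 0) (nhds x) := by
        have := hco.tendsto 0
        simpa using this
      exact h0.mono_left nhdsWithin_le_nhds
    exact tendsto_const_nhds.mul ((hf.tendsto x).comp h1)

end cv

theorem mollified_initial_condition_convergence
    (u₀ : ℝ → ℝ) (hc : Continuous u₀) (hb : ∃ M, ∀ x, |u₀ x| ≤ M)
    (hi : MeasureTheory.Integrable u₀) :
    (∀ x ε : ℝ, 0 < ε →
      |uEps u₀ ε x| ≤ (⨆ z : ℝ, |u₀ z|) * Real.exp (∫ z : ℝ, |u₀ z|)) ∧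
    (∀ x : ℝ, Filter.Tendsto (fun ε => uEps u₀ ε x)
      (nhdsWithin 0 (Set.Ioi 0)) (nhds (u₀ x))) ∧
    (∀ t x : ℝ, 0 < t →
      Filter.Tendsto (fun ε => ∫ y : ℝ, G t (x - y) * uEps u₀ ε y)
        (nhdsWithin 0 (Set.Ioi 0)) (nhds (∫ y : ℝ, G t (x - y) * u₀ y))) := by
  obtain ⟨M₀, hM₀⟩ := hb
  set L : ℝ := ∫ z : ℝ, |u₀ z| with hLdef
  set M : ℝ := ⨆ z : ℝ, |u₀ z| with hMdef
  have hbdd : BddAbove (Set.range fun z : ℝ => |u₀ z|) := by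
    refine ⟨M₀, ?_⟩; rintro _ ⟨z, rfl⟩; exact hM₀ z
  have hM : ∀ y : ℝ, |u₀ y| ≤ M := fun y => le_ciSup hbdd y
  have hM0 : 0 ≤ M := (abs_nonneg _).trans (hM 0)
  have hL0 : 0 ≤ L := integral_nonneg fun z => abs_nonneg _
  -- bound on the primitive
  have hS : ∀ x : ℝ, |∫ y in (0:ℝ)..x, u₀ y| ≤ L := by
    intro x
    have h1 : |∫ y in (0:ℝ)..x, u₀ y| ≤ abs (∫ y in (0:ℝ)..x, |u₀ y|) := by
      have h := @intervalIntegral.norm_integral_le_abs_integral_norm ℝ _ _ 0 x u₀ volume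
      simp only [Real.norm_eq_abs] at h
      exact h
    have h2 : abs (∫ y in (0:ℝ)..x, |u₀ y|) = abs (∫ y in Set.uIoc (0:ℝ) x, |u₀ y|) :=
      intervalIntegral.abs_intervalIntegral_eq _ _ _ _
    have h3 : (0:ℝ) ≤ ∫ y in Set.uIoc (0:ℝ) x, |u₀ y| :=
      setIntegral_nonneg measurableSet_uIoc fun y _ => abs_nonneg _
    have h4 : (∫ y in Set.uIoc (0:ℝ) x, |u₀ y|) ≤ L :=
      setIntegral_le_integral hi.abs (Filter.Eventually.of_forall fun y => abs_nonneg _)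
    calc |∫ y in (0:ℝ)..x, u₀ y| ≤ abs (∫ y in Set.uIoc (0:ℝ) x, |u₀ y|) := h1.trans h2.le
      _ = ∫ y in Set.uIoc (0:ℝ) x, |u₀ y| := abs_of_nonneg h3
      _ ≤ L := h4
  -- bounds on psi0
  have hpsi_pos : ∀ y : ℝ, 0 < psi0 u₀ y := fun y => Real.exp_pos _
  have hpsi_ub : ∀ y : ℝ, psi0 u₀ y ≤ Real.exp (L / 2) := by
    intro y
    apply Real.exp_le_exp.mpr
    have := (abs_le.mp (hS y)).1
    nlinarith
  have hpsi_lb : ∀ y : ℝ, Real.exp (-(L / 2)) ≤ psi0 u₀ y := by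
    intro y
    apply Real.exp_le_exp.mpr
    have := (abs_le.mp (hS y)).2
    nlinarith
  have hpsi_abs : ∀ y : ℝ, |psi0 u₀ y| ≤ Real.exp (L / 2) := by
    intro y; rw [abs_of_pos (hpsi_pos y)]; exact hpsi_ub y
  have hpsi'_abs : ∀ y : ℝ, |psi0' u₀ y| ≤ 1 / 2 * (M * Real.exp (L / 2)) := by
    intro y
    unfold psi0'
    rw [abs_mul, abs_mul]
    have h1 : |(-(1/2) : ℝ)| = 1/2 := by norm_num
    rw [h1, mul_assoc]
    apply mul_le_mul_of_nonneg_left _ (by norm_num)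
    exact mul_le_mul (hM y) (hpsi_abs y) (abs_nonneg _) hM0
  -- continuity of psi0 and psi0'
  have hprim : Continuous fun x : ℝ => ∫ y in (0:ℝ)..x, u₀ y :=
    intervalIntegral.continuous_primitive (fun a b => hc.intervalIntegrable a b) 0
  have hpsi_cont : Continuous (psi0 u₀) :=
    Real.continuous_exp.comp (continuous_const.mul hprim)
  have hpsi'_cont : Continuous (psi0' u₀) :=
    ((continuous_const.mul hc).mul hpsi_cont)
  -- the rewritten form of uEps
  have huEps : ∀ {ε : ℝ}, 0 < ε → ∀ x : ℝ, uEps u₀ ε x =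
      -2 * (∫ z : ℝ, gw z * psi0' u₀ (x - 2 * Real.sqrt ε * z)) /
        (∫ z : ℝ, gw z * psi0 u₀ (x - 2 * Real.sqrt ε * z)) := by
    intro ε hε x
    unfold uEps
    rw [conv_eq (psi0' u₀) hε x, conv_eq (psi0 u₀) hε x]
  -- Part (i)
  have part1 : ∀ x ε : ℝ, 0 < ε → |uEps u₀ ε x| ≤ M * Real.exp L := by
    intro x ε hε
    rw [huEps hε x]
    set N := ∫ z : ℝ, gw z * psi0' u₀ (x - 2 * Real.sqrt ε * z)
    set D := ∫ z : ℝ, gw z * psi0 u₀ (x - 2 * Real.sqrt ε * z)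
    have hNle : |N| ≤ 1 / 2 * (M * Real.exp (L / 2)) :=
      cv_abs_le hpsi'_cont hpsi'_abs _ x
    have hDge : Real.exp (-(L / 2)) ≤ D :=
      cv_lower hpsi_cont hpsi_abs hpsi_lb _ x
    have hDpos : 0 < D := lt_of_lt_of_le (Real.exp_pos _) hDge
    rw [abs_div, abs_of_pos hDpos, abs_mul]
    have h2 : |(-2 : ℝ)| = 2 := by norm_num
    rw [h2]
    calc 2 * |N| / D ≤ 2 * |N| / Real.exp (-(L / 2)) :=
          div_le_div_of_nonneg_left (by positivity) (Real.exp_pos _) hDge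
      _ = 2 * |N| * Real.exp (L / 2) := by
          have h := Real.exp_ne_zero (L / 2)
          rw [Real.exp_neg]
          field_simp
      _ ≤ 2 * (1 / 2 * (M * Real.exp (L / 2))) * Real.exp (L / 2) := by
          have := Real.exp_pos (L / 2)
          gcongr
      _ = M * (Real.exp (L / 2) * Real.exp (L / 2)) := by ring
      _ = M * Real.exp L := by
          rw [← Real.exp_add]
          norm_num
  -- Part (ii)
  have part2 : ∀ x : ℝ, Tendsto (fun ε => uEps u₀ ε x)
      (nhdsWithin 0 (Set.Ioi 0)) (nhds (u₀ x)) := by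
    intro x
    have hN : Tendsto (fun ε : ℝ => ∫ z : ℝ, gw z * psi0' u₀ (x - 2 * Real.sqrt ε * z))
        (nhdsWithin 0 (Set.Ioi 0)) (nhds (psi0' u₀ x)) :=
      cv_tendsto hpsi'_cont hpsi'_abs x
    have hD : Tendsto (fun ε : ℝ => ∫ z : ℝ, gw z * psi0 u₀ (x - 2 * Real.sqrt ε * z))
        (nhdsWithin 0 (Set.Ioi 0)) (nhds (psi0 u₀ x)) :=
      cv_tendsto hpsi_cont hpsi_abs x
    have hne : psi0 u₀ x ≠ 0 := (hpsi_pos x).ne'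
    have hlim : Tendsto (fun ε : ℝ =>
        -2 * (∫ z : ℝ, gw z * psi0' u₀ (x - 2 * Real.sqrt ε * z)) /
          (∫ z : ℝ, gw z * psi0 u₀ (x - 2 * Real.sqrt ε * z)))
        (nhdsWithin 0 (Set.Ioi 0)) (nhds (-2 * psi0' u₀ x / psi0 u₀ x)) :=
      (tendsto_const_nhds.mul hN).div hD hne
    have hval : -2 * psi0' u₀ x / psi0 u₀ x = u₀ x := by
      unfold psi0'
      field_simp
    rw [hval] at hlim
    refine hlim.congr' ?_
    filter_upwards [self_mem_nhdsWithin] with ε hε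
    exact (huEps hε x).symm
  refine ⟨part1, part2, ?_⟩
  -- Part (iii)
  intro t x ht
  have hGt_cont : Continuous fun y : ℝ => G t (x - y) := by
    unfold G
    exact continuous_const.mul (Real.continuous_exp.comp
      (((continuous_const.sub continuous_id).pow 2).neg.div_const _))
  have hGt_nonneg : ∀ y : ℝ, 0 ≤ G t (x - y) := by
    intro y
    unfold G
    have h4 : (0:ℝ) ≤ 4 * Real.pi * t := by positivity
    exact mul_nonneg (Real.rpow_nonneg h4 _) (Real.exp_pos _).le
  have hGt_int : Integrable fun y : ℝ => G t (x - y) := by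
    have hb' : (0:ℝ) < 1 / (4 * t) := by positivity
    have h1 : Integrable (fun w : ℝ => Real.exp (-(1 / (4 * t)) * w ^ 2)) :=
      integrable_exp_neg_mul_sq hb'
    have h3 := h1.const_mul ((4 * Real.pi * t) ^ (-(1:ℝ)/2))
    have h4 : (fun w : ℝ => (4 * Real.pi * t) ^ (-(1:ℝ)/2) *
        Real.exp (-(1 / (4 * t)) * w ^ 2)) = G t := by
      funext w
      unfold G
      congr 1
      ring
    have h2 : Integrable (G t) := h4 ▸ h3
    exact h2.comp_sub_left x
  apply tendsto_integral_filter_of_dominated_convergence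
    (bound := fun y => G t (x - y) * (M * Real.exp L))
  · filter_upwards [self_mem_nhdsWithin] with ε hε
    have hε' : (0:ℝ) < ε := hε
    have hu_cont : Continuous fun y : ℝ => uEps u₀ ε y := by
      have heq : (fun y : ℝ => uEps u₀ ε y) = fun y : ℝ =>
          -2 * (∫ z : ℝ, gw z * psi0' u₀ (y - 2 * Real.sqrt ε * z)) /
            (∫ z : ℝ, gw z * psi0 u₀ (y - 2 * Real.sqrt ε * z)) :=
        funext fun y => huEps hε' y
      rw [heq]
      have hDc : Continuous fun y : ℝ =>
          ∫ z : ℝ, gw z * psi0 u₀ (y - 2 * Real.sqrt ε * z) :=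
        cv_cont hpsi_cont hpsi_abs _
      have hNc : Continuous fun y : ℝ =>
          ∫ z : ℝ, gw z * psi0' u₀ (y - 2 * Real.sqrt ε * z) :=
        cv_cont hpsi'_cont hpsi'_abs _
      refine (continuous_const.mul hNc).div hDc fun y => ?_
      have hDge : Real.exp (-(L / 2)) ≤
          ∫ z : ℝ, gw z * psi0 u₀ (y - 2 * Real.sqrt ε * z) :=
        cv_lower hpsi_cont hpsi_abs hpsi_lb _ y
      exact (lt_of_lt_of_le (Real.exp_pos _) hDge).ne'
    exact (hGt_cont.mul hu_cont).aestronglyMeasurable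
  · filter_upwards [self_mem_nhdsWithin] with ε hε
    filter_upwards with y
    rw [Real.norm_eq_abs, abs_mul, abs_of_nonneg (hGt_nonneg y)]
    exact mul_le_mul_of_nonneg_left (part1 y ε hε) (hGt_nonneg y)
  · exact hGt_int.mul_const _
  · filter_upwards with y
    exact tendsto_const_nhds.mul (part2 y)
end

section
/- Let q > 2 and let f ∈ L^q(ℝ) be non-negative. Then there exists a constant C, depending only on q, such that for all t > 0 and all x ∈ ℝ one has ∫₀^{t} ∫_ℝ f(y)² G_{t−s}(x−y)² dy ds ≤ C ‖f‖²_{L^q(ℝ)} t^{1/2 − 1/q}. -/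
open MeasureTheory Real Filter

lemma aux_memLp {g : ℝ → ℝ} {r : ℝ} (hr : 0 < r)
    (hg : AEStronglyMeasurable g (volume : Measure ℝ))
    (h : Integrable (fun y => ‖g y‖ ^ r)) : MemLp g (ENNReal.ofReal r) := by
  have h0 : ENNReal.ofReal r ≠ 0 := (ENNReal.ofReal_pos.mpr hr).ne'
  have := memLp_norm_rpow_iff (p := ENNReal.ofReal r) hg h0 ENNReal.ofReal_ne_top
  rw [ENNReal.toReal_ofReal hr.le, ENNReal.div_self h0 ENNReal.ofReal_ne_top,
    memLp_one_iff_integrable] at this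
  exact this.mp h

lemma G_sq {τ : ℝ} (hτ : 0 < τ) (z : ℝ) :
    G τ z ^ 2 = (4 * π * τ) ^ (-(1:ℝ)) * Real.exp (-(1/(2*τ)) * z ^ 2) := by
  unfold G
  rw [mul_pow, ← Real.rpow_natCast ((4*π*τ) ^ (-(1:ℝ)/2)) 2,
    ← Real.rpow_mul (by positivity), ← Real.exp_nat_mul]
  norm_num
  left; field_simp; ring

lemma G_sq_rpow {τ : ℝ} (hτ : 0 < τ) (r : ℝ) (z : ℝ) :
    (G τ z ^ 2) ^ r = (4 * π * τ) ^ (-(r)) * Real.exp (-(r/(2*τ)) * z ^ 2) := by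
  rw [G_sq hτ, Real.mul_rpow (by positivity) (exp_nonneg _),
    ← Real.rpow_mul (by positivity), ← Real.exp_mul]
  ring_nf

lemma G_sq_rpow_integral {τ : ℝ} (hτ : 0 < τ) (r : ℝ) (x : ℝ) :
    ∫ y : ℝ, (G τ (x - y) ^ 2) ^ r
      = (4 * π * τ) ^ (-(r)) * Real.sqrt (π / (r/(2*τ))) := by
  simp only [G_sq_rpow hτ r]
  rw [integral_const_mul, MeasureTheory.integral_sub_left_eq_self
    (fun z => Real.exp (-(r/(2*τ)) * z ^ 2)) volume x, integral_gaussian]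

lemma inner_est {q r α : ℝ} (hq : 2 < q) (hr : r = q/(q-2)) (hα : α = 1/2 - 1/q)
    {f : ℝ → ℝ} (hfm : Measurable f) (hf0 : ∀ y, 0 ≤ f y)
    (hfq : Integrable (fun y => f y ^ q)) {τ : ℝ} (hτ : 0 < τ) (x : ℝ) :
    ∫ y : ℝ, f y ^ 2 * G τ (x - y) ^ 2
      ≤ (∫ y : ℝ, f y ^ q) ^ (2/q) * (((4*π)⁻¹ * (2*π/r) ^ α) * τ ^ (α-1)) := by
  have hq0 : (0:ℝ) < q := by linarith
  have hrpos : 0 < r := by rw [hr]; apply div_pos <;> linarith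
  have hr1 : 1 < r := by
    rw [hr, lt_div_iff₀ (by linarith)]; linarith
  have conj : (q/2).HolderConjugate r := by
    refine Real.holderConjugate_iff.mpr ⟨by linarith, ?_⟩
    rw [hr]; field_simp; ring
  -- pointwise identity (f y ^ 2) ^ (q/2) = f y ^ q
  have hpt : ∀ y, (f y ^ 2) ^ (q/2) = f y ^ q := by
    intro y
    rw [← Real.rpow_natCast (f y) 2, ← Real.rpow_mul (hf0 y)]
    norm_num [show (2:ℝ)*(q/2) = q by ring]
  have hGc : Continuous fun y => G τ (x - y) ^ 2 := by
    unfold G; fun_prop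
  have hF : MemLp (fun y => f y ^ 2) (ENNReal.ofReal (q/2)) (volume : Measure ℝ) := by
    apply aux_memLp (by linarith : (0:ℝ) < q/2) (hfm.pow_const 2).aestronglyMeasurable
    apply hfq.congr
    filter_upwards with y
    rw [Real.norm_of_nonneg (by positivity), hpt]
  have hH : MemLp (fun y => G τ (x - y) ^ 2) (ENNReal.ofReal r) (volume : Measure ℝ) := by
    apply aux_memLp hrpos hGc.aestronglyMeasurable
    have : Integrable (fun y : ℝ => (4 * π * τ) ^ (-(r)) *
        Real.exp (-(r/(2*τ)) * (x - y) ^ 2)) := by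
      apply Integrable.const_mul
      rw [integrable_comp_sub_left (fun z => Real.exp (-(r/(2*τ)) * z ^ 2)) x]
      exact integrable_exp_neg_mul_sq (by positivity)
    apply this.congr
    filter_upwards with y
    rw [Real.norm_of_nonneg (by positivity), G_sq_rpow hτ]
  have H := integral_mul_le_Lp_mul_Lq_of_nonneg conj
    (Eventually.of_forall fun y => by positivity)
    (Eventually.of_forall fun y => by positivity) hF hH
  refine H.trans_eq ?_
  rw [G_sq_rpow_integral hτ r x]
  congr 1
  · rw [show (1:ℝ)/(q/2) = 2/q by field_simp]
    congr 1
    exact integral_congr_ae (Eventually.of_forall fun y => hpt y)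
  · -- ((4πτ)^(-r) * sqrt(π/(r/(2τ))))^(1/r) = (4π)⁻¹ (2π/r)^α τ^(α-1)
    have h1 : π / (r/(2*τ)) = (2*π/r) * τ := by field_simp
    have h2 : Real.sqrt ((2*π/r) * τ) = ((2*π/r) * τ) ^ ((1:ℝ)/2) :=
      Real.sqrt_eq_rpow _
    rw [h1, h2, Real.mul_rpow (by positivity) (by positivity),
      ← Real.rpow_mul (by positivity), ← Real.rpow_mul (by positivity)]
    have hαr : (1:ℝ)/2 * (1/r) = α := by
      rw [hα, hr]; field_simp
    have hnr : -r * (1/r) = -1 := by field_simp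
    rw [hnr, hαr]
    have e1 : (4*π*τ) ^ (-1:ℝ) = (4*π)⁻¹ * τ ^ (-1:ℝ) := by
      rw [Real.mul_rpow (by positivity) hτ.le, Real.rpow_neg_one]
    have e2 : ((2*π/r) * τ) ^ α = (2*π/r) ^ α * τ ^ α := by
      rw [Real.mul_rpow (by positivity) hτ.le]
    rw [e1, e2]
    rw [show α - 1 = -1 + α by ring, Real.rpow_add hτ]
    ring

theorem heat_kernel_squared_convolution_estimate
    (q : ℝ) (hq : 2 < q) (f : ℝ → ℝ) (hfm : Measurable f) (hf0 : ∀ y, 0 ≤ f y)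
    (hfq : MeasureTheory.Integrable (fun y => f y ^ q)) :
    ∃ C : ℝ, 0 < C ∧ ∀ t x : ℝ, 0 < t →
      ∫ s in (0:ℝ)..t, ∫ y : ℝ, f y ^ 2 * G (t - s) (x - y) ^ 2
        ≤ C * ((∫ y : ℝ, f y ^ q) ^ (1/q)) ^ 2 * t ^ ((1:ℝ)/2 - 1/q) := by
  have hq0 : (0:ℝ) < q := by linarith
  set r : ℝ := q/(q-2) with hr
  set α : ℝ := 1/2 - 1/q with hα
  have hrpos : 0 < r := by rw [hr]; apply div_pos <;> linarith
  have hα0 : 0 < α := by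
    rw [hα]; have : 1/q < 1/2 := by
      rw [div_lt_div_iff₀ hq0 (by norm_num)]; linarith
    linarith
  have hα1 : α < 1 := by
    rw [hα]; have : 0 < 1/q := by positivity
    linarith
  set K : ℝ := (4*π)⁻¹ * (2*π/r) ^ α with hK
  have hK0 : 0 < K := by
    rw [hK]; have h2r : 0 < 2*π/r := by positivity
    positivity
  refine ⟨K/α, by positivity, ?_⟩
  intro t x ht
  set B : ℝ := ∫ y, f y ^ q with hB
  have hB0 : 0 ≤ B := integral_nonneg fun y => Real.rpow_nonneg (hf0 y) q
  have key : ∀ s ∈ Set.Ioc (0:ℝ) t,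
      ∫ y : ℝ, f y ^ 2 * G (t-s) (x-y) ^ 2 ≤ (B ^ (2/q) * K) * (t-s) ^ (α-1) := by
    intro s hs
    rcases eq_or_lt_of_le hs.2 with h | h
    · -- s = t
      have hts : t - s = 0 := by rw [h]; ring
      rw [hts]
      have : ∀ y : ℝ, f y ^ 2 * G 0 (x-y) ^ 2 = 0 := by
        intro y
        have : G 0 (x-y) = 0 := by
          unfold G
          rw [mul_zero, Real.zero_rpow (by norm_num)]
          ring
        rw [this]; ring
      simp only [this, integral_zero, Real.zero_rpow (by linarith : α - 1 ≠ 0), mul_zero]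
      exact le_rfl
    · have h1 := inner_est hq hr hα hfm hf0 hfq (by linarith : 0 < t - s) x
      calc ∫ y : ℝ, f y ^ 2 * G (t-s) (x-y) ^ 2
          ≤ B ^ (2/q) * (((4*π)⁻¹ * (2*π/r) ^ α) * (t-s) ^ (α-1)) := h1
        _ = (B ^ (2/q) * K) * (t-s) ^ (α-1) := by rw [hK]; ring
  have hIntBase : IntegrableOn (fun s : ℝ => (t-s) ^ (α-1)) (Set.Ioc 0 t) := by
    have h0 : IntervalIntegrable (fun u : ℝ => u ^ (α-1)) volume 0 t :=
      intervalIntegral.intervalIntegrable_rpow' (by linarith)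
    have h1 := (h0.comp_sub_left t)
    rw [sub_self, sub_zero] at h1
    exact (intervalIntegrable_iff_integrableOn_Ioc_of_le ht.le).mp h1.symm
  have hInt : IntegrableOn (fun s : ℝ => (B ^ (2/q) * K) * (t-s) ^ (α-1)) (Set.Ioc 0 t) :=
    hIntBase.const_mul _
  rw [intervalIntegral.integral_of_le ht.le]
  have step : ∫ s in Set.Ioc (0:ℝ) t, ∫ y : ℝ, f y ^ 2 * G (t-s) (x-y) ^ 2
      ≤ ∫ s in Set.Ioc (0:ℝ) t, (B ^ (2/q) * K) * (t-s) ^ (α-1) := by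
    apply integral_mono_of_nonneg
    · filter_upwards with s
      exact integral_nonneg fun y => by positivity
    · exact hInt
    · exact (ae_restrict_iff' measurableSet_Ioc).mpr (Eventually.of_forall key)
  refine step.trans ?_
  rw [← intervalIntegral.integral_of_le ht.le, intervalIntegral.integral_const_mul]
  have e3 : ∫ s in (0:ℝ)..t, (t-s) ^ (α-1) = t ^ α / α := by
    rw [intervalIntegral.integral_comp_sub_left (fun u : ℝ => u ^ (α-1)) t,
      sub_self, sub_zero, integral_rpow (Or.inl (by linarith : (-1:ℝ) < α - 1))]
    rw [sub_add_cancel, Real.zero_rpow hα0.ne', sub_zero]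
  rw [e3]
  have e4 : (B ^ ((1:ℝ)/q)) ^ 2 = B ^ ((2:ℝ)/q) := by
    rw [← Real.rpow_natCast (B ^ ((1:ℝ)/q)) 2, ← Real.rpow_mul hB0]
    push_cast
    congr 1
    ring
  rw [e4]
  rw [div_mul_eq_mul_div, div_mul_eq_mul_div, mul_div_assoc]
  apply le_of_eq
  ring
end
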